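/- Define in p-representation β̌_k = Σ_r (∇_r Ǔ_k) V^r + Σ_r (∂Ǔ_k/∂p_r) Q_r + Σ_r (∇_k V^r) Ǔ_r + Σ_r (∇_k Q_r) W^r − Σ_{r,s,m} (Ř^s_{rmk} V^m − Ď^{sm}_{rk} Q_m) W^r p_s. Then for every point (x,v) and all k: β̌_k(x, L(x,v)) = β_k(x,v), where β_k is the v-representation expression given in the context. -/

import Mathlib

/- Coordinate formalization of extended tensor fields in v- and p-representation
   for a generalized Legendre transformation λ(x,v) = (x, L(x,v)). -/

noncomputable section

open scoped BigOperators

/-- A point of the (co)tangent bundle in a single chart: a pair (x, v) or (x, p). -/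
abbrev Pt (n : ℕ) := (Fin n → ℝ) × (Fin n → ℝ)

/-- An indexed family of scalar functions (components of a (co)vector field). -/
abbrev Fam (n : ℕ) := Fin n → Pt n → ℝ

/-- Components Γ^k_{ij} of an extended connection (or of a gauge tensor T^k_{ij}). -/
abbrev Conn (n : ℕ) := Fin n → Fin n → Fin n → Pt n → ℝ

variable {n : ℕ}

/-- Kronecker delta δ^i_j. -/
def kron (i j : Fin n) : ℝ := if i = j then 1 else 0

/-- Partial derivative ∂f/∂x^m (first slot). -/
def pdx (m : Fin n) (f : Pt n → ℝ) (q : Pt n) : ℝ :=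
  fderiv ℝ f q (Pi.single m 1, 0)

/-- Partial derivative ∂f/∂v^m (resp. ∂f/∂p_m): second slot. -/
def pdv (m : Fin n) (f : Pt n → ℝ) (q : Pt n) : ℝ :=
  fderiv ℝ f q (0, Pi.single m 1)

/-- The generalized Legendre transformation λ(x,v) = (x, L(x,v)). -/
def lam (L : Fam n) (q : Pt n) : Pt n := (q.1, fun i => L i q)

/-- The inverse map λ⁻¹(x,p) = (x, V(x,p)). -/
def lamInv (V : Fam n) (q : Pt n) : Pt n := (q.1, fun i => V i q)

/-- g_{rk} = ∂L_r/∂v^k. -/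
def gdn (L : Fam n) (r k : Fin n) (q : Pt n) : ℝ := pdv k (L r) q

/-- L^i = Σ_q L_q g^{qi}. -/
def Lup (L : Fam n) (ginv : Fin n → Fin n → Pt n → ℝ) (i : Fin n) (q : Pt n) : ℝ :=
  ∑ j, L j q * ginv j i q

/-- |L|² = Σ_s L_s L^s. -/
def L2 (L : Fam n) (ginv : Fin n → Fin n → Pt n → ℝ) (q : Pt n) : ℝ :=
  ∑ s, L s q * Lup L ginv s q

/-- p-representation: W^i = Σ_s p_s ∂V^s/∂p_i. -/
def Wp (V : Fam n) (i : Fin n) (q : Pt n) : ℝ :=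
  ∑ s, q.2 s * pdv i (V s) q

/-- p-representation: Ω = Σ_s p_s W^s. -/
def Omga (V : Fam n) (q : Pt n) : ℝ := ∑ s, q.2 s * Wp V s q

/-- p-representation projector P̌^i_j = δ^i_j − W^i p_j / Ω. -/
def Pp (V : Fam n) (i j : Fin n) (q : Pt n) : ℝ :=
  kron i j - Wp V i q * q.2 j / Omga V q

/-- v-representation projector P^i_j = δ^i_j − L^i L_j / |L|². -/
def Pv (L : Fam n) (ginv : Fin n → Fin n → Pt n → ℝ) (i j : Fin n) (q : Pt n) : ℝ :=
  kron i j - Lup L ginv i q * L j q / L2 L ginv q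

/-- Scalar part of the v-representation horizontal covariant derivative:
    ∂f/∂x^m − Σ_{a,b} v^a Γ^b_{am} ∂f/∂v^b. -/
def vS (Γ : Conn n) (m : Fin n) (f : Pt n → ℝ) (q : Pt n) : ℝ :=
  pdx m f q - ∑ a, ∑ b, q.2 a * Γ b a m q * pdv b f q

/-- v-representation ∇_m X_j of a covector field. -/
def vCov (Γ : Conn n) (m : Fin n) (X : Fam n) (j : Fin n) (q : Pt n) : ℝ :=
  vS Γ m (X j) q - ∑ b, Γ b m j q * X b q

/-- v-representation ∇_m X^i of a vector field. -/
def vVec (Γ : Conn n) (m : Fin n) (X : Fam n) (i : Fin n) (q : Pt n) : ℝ :=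
  vS Γ m (X i) q + ∑ a, Γ i m a q * X a q

/-- v-representation ∇_k Y_{m r} of a (0,2) tensor field. -/
def vCov2 (Γ : Conn n) (k : Fin n) (Y : Fin n → Fin n → Pt n → ℝ)
    (m r : Fin n) (q : Pt n) : ℝ :=
  vS Γ k (Y m r) q - (∑ b, Γ b k m q * Y b r q) - (∑ b, Γ b k r q * Y m b q)

/-- v-representation ∇_m T^k_{ij} of a (1,2) tensor field. -/
def vT12 (Γ : Conn n) (m : Fin n) (T : Conn n) (k i j : Fin n) (q : Pt n) : ℝ :=
  vS Γ m (T k i j) q + (∑ a, Γ k m a q * T a i j q)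
    - (∑ b, Γ b m i q * T k b j q) - (∑ b, Γ b m j q * T k i b q)

/-- Connection components in p-representation: Γ^k_{ij} ∘ λ⁻¹. -/
def Gp (Γ : Conn n) (V : Fam n) (k i j : Fin n) (q : Pt n) : ℝ :=
  Γ k i j (lamInv V q)

/-- Scalar part of the p-representation horizontal covariant derivative:
    ∂f/∂x^m + Σ_{a,b} p_a Γ^a_{mb} ∂f/∂p_b. -/
def pS (G : Conn n) (m : Fin n) (f : Pt n → ℝ) (q : Pt n) : ℝ :=
  pdx m f q + ∑ a, ∑ b, q.2 a * G a m b q * pdv b f q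

/-- p-representation ∇_m X_j of a covector field. -/
def pCov (G : Conn n) (m : Fin n) (X : Fam n) (j : Fin n) (q : Pt n) : ℝ :=
  pS G m (X j) q - ∑ b, G b m j q * X b q

/-- p-representation ∇_m X^i of a vector field. -/
def pVec (G : Conn n) (m : Fin n) (X : Fam n) (i : Fin n) (q : Pt n) : ℝ :=
  pS G m (X i) q + ∑ a, G i m a q * X a q

/-- Force vector F^i = Φ^i + Σ_{j,k} Γ^i_{jk} v^j v^k. -/
def Fvec (Γ : Conn n) (Φ : Fam n) (i : Fin n) (q : Pt n) : ℝ :=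
  Φ i q + ∑ j, ∑ k, Γ i j k q * q.2 j * q.2 k

/-- Force covector F_q = Σ_i g_{qi} F^i. -/
def Fcov (L : Fam n) (Γ : Conn n) (Φ : Fam n) (i : Fin n) (q : Pt n) : ℝ :=
  ∑ j, gdn L i j q * Fvec Γ Φ j q

/-- p-representation force covector Q_i = Θ_i − Σ_{j,k} Γ^k_{ij} V^j p_k. -/
def Qp (Θ : Fam n) (Γ : Conn n) (V : Fam n) (i : Fin n) (q : Pt n) : ℝ :=
  Θ i q - ∑ j, ∑ k, Gp Γ V k i j q * V j q * q.2 k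

/-- p-representation covector Ǔ_i = Q_i + Σ_s (∇_i V^s) p_s. -/
def Ucheck (Θ : Fam n) (Γ : Conn n) (V : Fam n) (i : Fin n) (q : Pt n) : ℝ :=
  Qp Θ Γ V i q + ∑ s, pVec (Gp Γ V) i V s q * q.2 s

/-- v-representation covector U_i = Σ_q v^q ∇_q L_i − Σ_q L^q ∇_i L_q + F_i. -/
def Uv (L : Fam n) (ginv : Fin n → Fin n → Pt n → ℝ) (Γ : Conn n) (Φ : Fam n)
    (i : Fin n) (q : Pt n) : ℝ :=
  (∑ j, q.2 j * vCov Γ j L i q) - (∑ j, Lup L ginv j q * vCov Γ i L j q) + Fcov L Γ Φ i q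

/-- v-representation dynamic curvature tensor D^k_{rij} = −∂Γ^k_{ir}/∂v^j. -/
def Dv (Γ : Conn n) (k r i j : Fin n) (q : Pt n) : ℝ := -(pdv j (Γ k i r) q)

/-- v-representation curvature tensor R^k_{rij}. -/
def Rv (Γ : Conn n) (k r i j : Fin n) (q : Pt n) : ℝ :=
  pdx i (Γ k j r) q - pdx j (Γ k i r) q
  + (∑ m, (Γ k i m q * Γ m j r q - Γ k j m q * Γ m i r q))
  - (∑ m, ∑ s, q.2 s * Γ m i s q * pdv m (Γ k j r) q)
  + (∑ m, ∑ s, q.2 s * Γ m j s q * pdv m (Γ k i r) q)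

/-- p-representation dynamic curvature tensor Ď^{kr}_{ij} = −∂Γ^k_{ij}/∂p_r. -/
def Dp (G : Conn n) (k r i j : Fin n) (q : Pt n) : ℝ := -(pdv r (G k i j) q)

/-- p-representation curvature tensor Ř^k_{rij}. -/
def Rp (G : Conn n) (k r i j : Fin n) (q : Pt n) : ℝ :=
  pdx i (G k j r) q - pdx j (G k i r) q
  + (∑ m, (G k i m q * G m j r q - G k j m q * G m i r q))
  + (∑ m, ∑ s, q.2 s * G s m i q * pdv m (G k j r) q)
  - (∑ m, ∑ s, q.2 s * G s m j q * pdv m (G k i r) q)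

/-- p-representation vector field α̌^k. -/
def alphaCheck (Θ : Fam n) (Γ : Conn n) (V : Fam n) (k : Fin n) (q : Pt n) : ℝ :=
  (∑ r, pdv k (V r) q * Ucheck Θ Γ V r q)
  + (∑ r, pVec (Gp Γ V) r (Wp V) k q * V r q)
  + (∑ r, pdv r (Wp V k) q * Qp Θ Γ V r q)
  + (∑ r, Wp V r q * pdv k (Qp Θ Γ V r) q)
  - (∑ r, ∑ s, ∑ j, q.2 s * Dp (Gp Γ V) s k r j q * Wp V r q * V j q)

/-- v-representation vector field α^k. -/
def alphaV (L : Fam n) (ginv : Fin n → Fin n → Pt n → ℝ) (Γ : Conn n) (Φ : Fam n)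
    (k : Fin n) (q : Pt n) : ℝ :=
  (∑ r, ginv r k q * Uv L ginv Γ Φ r q)
  + (∑ r, q.2 r * vVec Γ r (Lup L ginv) k q)
  + (∑ j, Fvec Γ Φ j q * pdv j (Lup L ginv k) q)
  + (∑ j, ∑ r, ∑ s, Lup L ginv r q * ginv j k q * q.2 s * pdv j (vCov Γ s L r) q)
  + (∑ j, ∑ r, Lup L ginv r q * ginv j k q * pdv j (Fcov L Γ Φ r) q)
  + (∑ j, ∑ r, Lup L ginv r q * ginv j k q * vCov Γ j L r q)
  - (∑ j, ∑ m, ∑ r, ∑ s, ginv m k q * L s q * Dv Γ s r j m q * Lup L ginv r q * q.2 j)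

/-- p-representation covector field β̌_k. -/
def betaCheck (Θ : Fam n) (Γ : Conn n) (V : Fam n) (k : Fin n) (q : Pt n) : ℝ :=
  (∑ r, pCov (Gp Γ V) r (Ucheck Θ Γ V) k q * V r q)
  + (∑ r, pdv r (Ucheck Θ Γ V k) q * Qp Θ Γ V r q)
  + (∑ r, pVec (Gp Γ V) k V r q * Ucheck Θ Γ V r q)
  + (∑ r, pCov (Gp Γ V) k (Qp Θ Γ V) r q * Wp V r q)
  - (∑ r, ∑ s, ∑ m, (Rp (Gp Γ V) s r m k q * V m q
      - Dp (Gp Γ V) s m r k q * Qp Θ Γ V m q) * Wp V r q * q.2 s)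

/-- v-representation covector field β_k. -/
def betaV (L : Fam n) (ginv : Fin n → Fin n → Pt n → ℝ) (Γ : Conn n) (Φ : Fam n)
    (k : Fin n) (q : Pt n) : ℝ :=
  (∑ r, q.2 r * vCov Γ r (Uv L ginv Γ Φ) k q)
  + (∑ j, Fvec Γ Φ j q * pdv j (Uv L ginv Γ Φ k) q)
  - (∑ j, ∑ r, ∑ s, vCov Γ k L j q * ginv r j q * q.2 s * vCov Γ s L r q)
  - (∑ j, ∑ r, vCov Γ k L j q * ginv r j q * Fcov L Γ Φ r q)
  + (∑ r, Lup L ginv r q * vCov Γ k (Fcov L Γ Φ) r q)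
  + (∑ m, ∑ r, Lup L ginv r q * q.2 m * vCov2 Γ k (fun m' r' => vCov Γ m' L r') m r q)
  - (∑ j, ∑ r, ∑ s, Lup L ginv r q * vCov Γ k L j q * ginv s j q * pdv s (Fcov L Γ Φ r) q)
  - (∑ j, ∑ m, ∑ r, ∑ s, Lup L ginv r q * vCov Γ k L j q * ginv s j q * q.2 m
      * pdv s (vCov Γ m L r) q)
  - (∑ r, ∑ s, ∑ m, Rv Γ s r m k q * q.2 m * Lup L ginv r q * L s q)
  + (∑ j, ∑ r, ∑ s, ∑ m, ∑ a, ginv a j q * vCov Γ k L j q * Dv Γ s m r a q * q.2 m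
      * Lup L ginv r q * L s q)
  + (∑ r, ∑ s, ∑ m, ∑ a, ginv a m q * Dv Γ s r k a q * Fcov L Γ Φ m q
      * Lup L ginv r q * L s q)

/-- v-representation covector field η_k = β_k − Σ_s U_k α^s L_s / |L|². -/
def etaV (L : Fam n) (ginv : Fin n → Fin n → Pt n → ℝ) (Γ : Conn n) (Φ : Fam n)
    (k : Fin n) (q : Pt n) : ℝ :=
  betaV L ginv Γ Φ k q
    - ∑ s, Uv L ginv Γ Φ k q * alphaV L ginv Γ Φ s q * L s q / L2 L ginv q

/-- p-representation tensor Ǎ^{rs} = ∂W^s/∂p_r. -/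
def Acheck (V : Fam n) (r s : Fin n) (q : Pt n) : ℝ := pdv r (Wp V s) q

/-- v-representation tensor A^{rs} = Σ_q g^{qr} ∂L^s/∂v^q. -/
def Av (L : Fam n) (ginv : Fin n → Fin n → Pt n → ℝ) (r s : Fin n) (q : Pt n) : ℝ :=
  ∑ j, ginv j r q * pdv j (Lup L ginv s) q

/-- p-representation tensor B̌^r_s. -/
def Bcheck (Θ : Fam n) (Γ : Conn n) (V : Fam n) (r s : Fin n) (q : Pt n) : ℝ :=
  pdv r (Ucheck Θ Γ V s) q
  + (∑ m, ∑ k, Wp V k q * q.2 m * Dp (Gp Γ V) m r k s q)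
  - pVec (Gp Γ V) s (Wp V) r q
  + (∑ m, (pdv m (Wp V r) q - pdv r (Wp V m) q) * Ucheck Θ Γ V s q * q.2 m / Omga V q)

/-- v-representation tensor B^r_s. -/
def Bv (L : Fam n) (ginv : Fin n → Fin n → Pt n → ℝ) (Γ : Conn n) (Φ : Fam n)
    (r s : Fin n) (q : Pt n) : ℝ :=
  (∑ j, ginv j r q * pdv j (Uv L ginv Γ Φ s) q)
  + (∑ m, ∑ k, ∑ j, ginv j r q * Lup L ginv k q * L m q * Dv Γ m k s j q)
  - vVec Γ s (Lup L ginv) r q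
  + (∑ j, ∑ k, vCov Γ s L k q * ginv j k q * pdv j (Lup L ginv r) q)
  + (∑ j, ∑ m, (ginv j m q * pdv j (Lup L ginv r) q - ginv j r q * pdv j (Lup L ginv m) q)
      * Uv L ginv Γ Φ s q * L m q / L2 L ginv q)

/-- p-representation tensor Č_{rs}. -/
def Ccheck (Θ : Fam n) (Γ : Conn n) (V : Fam n) (r s : Fin n) (q : Pt n) : ℝ :=
  pCov (Gp Γ V) r (Ucheck Θ Γ V) s q
  - (∑ m, (Ucheck Θ Γ V r q * pdv m (Ucheck Θ Γ V s) q
      + Ucheck Θ Γ V s q * pVec (Gp Γ V) r (Wp V) m q) * q.2 m / Omga V q)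
  - (∑ k, ∑ j, ((∑ m, Dp (Gp Γ V) m j k s q * Ucheck Θ Γ V r q * q.2 m / Omga V q)
      + Rp (Gp Γ V) j k r s q / 2) * Wp V k q * q.2 j)

/-- v-representation tensor C_{rs}. -/
def Cv (L : Fam n) (ginv : Fin n → Fin n → Pt n → ℝ) (Γ : Conn n) (Φ : Fam n)
    (r s : Fin n) (q : Pt n) : ℝ :=
  vCov Γ r (Uv L ginv Γ Φ) s q
  - (∑ j, ∑ k, vCov Γ r L j q * ginv k j q * pdv k (Uv L ginv Γ Φ s) q)
  - (∑ m, Uv L ginv Γ Φ s q * vVec Γ r (Lup L ginv) m q * L m q / L2 L ginv q)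
  - (∑ j, ∑ m, Uv L ginv Γ Φ r q * ginv j m q * pdv j (Uv L ginv Γ Φ s) q * L m q
      / L2 L ginv q)
  + (∑ m, ∑ j, ∑ k, Uv L ginv Γ Φ s q * vCov Γ r L k q * ginv j k q
      * pdv j (Lup L ginv m) q * L m q / L2 L ginv q)
  - (∑ k, ∑ j, ∑ m, ∑ a, ginv a j q * Dv Γ m k s a q * Uv L ginv Γ Φ r q * L m q
      * Lup L ginv k q * L j q / L2 L ginv q)
  - (∑ k, ∑ j, (Rv Γ j k r s q / 2) * Lup L ginv k q * L j q)
  - (∑ k, ∑ j, ∑ m, ∑ a, vCov Γ r L m q * Dv Γ j k s a q * ginv a m q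
      * Lup L ginv k q * L j q)

/-- Gauge-transformed connection Γ' = Γ + T. -/
def addT (Γ T : Conn n) : Conn n := fun k i j q => Γ k i j q + T k i j q

/-- The quantity Ξ_{rs} appearing in the gauge transformation rule for C. -/
def XiG (L : Fam n) (ginv : Fin n → Fin n → Pt n → ℝ) (Γ : Conn n) (Φ : Fam n)
    (T : Conn n) (r s : Fin n) (q : Pt n) : ℝ :=
  (∑ j, ∑ b, ∑ m, T b r j q * L b q * Pv L ginv j m q * Bv L ginv Γ Φ m s q)
  + (∑ j, ∑ b, ∑ m, ∑ a, ∑ c, ∑ e, T b r j q * L b q * Pv L ginv j m q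
      * Av L ginv m a q * Pv L ginv c a q * T e s c q * L e q)

end
namespace Stmt7Aux

open Finset

variable {n : ℕ}

/-- Directional derivative. -/
noncomputable def pdd (w : Pt n) (f : Pt n → ℝ) (q : Pt n) : ℝ := fderiv ℝ f q w

lemma pdx_eq_pdd (m : Fin n) (f : Pt n → ℝ) : pdx m f = pdd (Pi.single m 1, 0) f := rfl
lemma pdv_eq_pdd (m : Fin n) (f : Pt n → ℝ) : pdv m f = pdd (0, Pi.single m 1) f := rfl

lemma diffAt {f : Pt n → ℝ} (hf : ContDiff ℝ (⊤ : ℕ∞) f) (q : Pt n) :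
    DifferentiableAt ℝ f q :=
  (hf.differentiable (by simp)).differentiableAt

lemma contDiff_pdd (w : Pt n) {f : Pt n → ℝ} (hf : ContDiff ℝ (⊤ : ℕ∞) f) :
    ContDiff ℝ (⊤ : ℕ∞) (pdd w f) := by
  have h1 : ContDiff ℝ (⊤ : ℕ∞) (fderiv ℝ f) := hf.fderiv_right (by exact_mod_cast le_top)
  exact (ContinuousLinearMap.apply ℝ ℝ w).contDiff.comp h1

lemma pdd_add (w : Pt n) {f g : Pt n → ℝ} {q : Pt n} (hf : DifferentiableAt ℝ f q)
    (hg : DifferentiableAt ℝ g q) :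
    pdd w (fun x => f x + g x) q = pdd w f q + pdd w g q := by
  simp [pdd, fderiv_fun_add hf hg]

lemma pdd_sub (w : Pt n) {f g : Pt n → ℝ} {q : Pt n} (hf : DifferentiableAt ℝ f q)
    (hg : DifferentiableAt ℝ g q) :
    pdd w (fun x => f x - g x) q = pdd w f q - pdd w g q := by
  simp [pdd, fderiv_fun_sub hf hg]

lemma pdd_neg (w : Pt n) (f : Pt n → ℝ) (q : Pt n) :
    pdd w (fun x => -(f x)) q = -pdd w f q := by
  simp [pdd, fderiv_neg]

lemma pdd_mul (w : Pt n) {f g : Pt n → ℝ} {q : Pt n} (hf : DifferentiableAt ℝ f q)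
    (hg : DifferentiableAt ℝ g q) :
    pdd w (fun x => f x * g x) q = pdd w f q * g q + f q * pdd w g q := by
  simp only [pdd, fderiv_fun_mul hf hg]
  simp [ContinuousLinearMap.add_apply, ContinuousLinearMap.smul_apply]
  ring

lemma pdd_sum (w : Pt n) {ι : Type*} (s : Finset ι) (A : ι → Pt n → ℝ) {q : Pt n}
    (h : ∀ i ∈ s, DifferentiableAt ℝ (A i) q) :
    pdd w (fun x => ∑ i ∈ s, A i x) q = ∑ i ∈ s, pdd w (A i) q := by
  simp [pdd, fderiv_fun_sum h]

lemma pdd_const (w : Pt n) (c : ℝ) (q : Pt n) : pdd w (fun _ => c) q = 0 := by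
  simp [pdd]

lemma pdd_coord2 (w : Pt n) (s : Fin n) (q : Pt n) :
    pdd w (fun x : Pt n => x.2 s) q = w.2 s := by
  have h : (fun x : Pt n => x.2 s) =
      ((ContinuousLinearMap.proj s).comp
        (ContinuousLinearMap.snd ℝ (Fin n → ℝ) (Fin n → ℝ))) := rfl
  rw [pdd, h, ContinuousLinearMap.fderiv]
  rfl

lemma diffAt_coord2 (s : Fin n) (q : Pt n) :
    DifferentiableAt ℝ (fun x : Pt n => x.2 s) q :=
  (((ContinuousLinearMap.proj s (R := ℝ) (φ := fun _ : Fin n => ℝ)).comp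
    (ContinuousLinearMap.snd ℝ (Fin n → ℝ) (Fin n → ℝ)))).differentiableAt

lemma contDiff_coord2 (s : Fin n) :
    ContDiff ℝ (⊤ : ℕ∞) (fun x : Pt n => x.2 s) :=
  (((ContinuousLinearMap.proj s (R := ℝ) (φ := fun _ : Fin n => ℝ)).comp
    (ContinuousLinearMap.snd ℝ (Fin n → ℝ) (Fin n → ℝ)))).contDiff

end Stmt7Aux
namespace Stmt7Aux

open Finset

variable {n : ℕ}

lemma contDiff_lam {L : Fam n} (hL : ∀ i, ContDiff ℝ (⊤ : ℕ∞) (L i)) :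
    ContDiff ℝ (⊤ : ℕ∞) (lam L) := by
  apply ContDiff.prodMk
  · exact contDiff_fst
  · exact contDiff_pi.mpr (fun i => hL i)

lemma diffAt_lam {L : Fam n} (hL : ∀ i, ContDiff ℝ (⊤ : ℕ∞) (L i)) (q : Pt n) :
    DifferentiableAt ℝ (lam L) q :=
  ((contDiff_lam hL).differentiable (by simp)).differentiableAt

lemma fderiv_lam_apply {L : Fam n} (hL : ∀ i, ContDiff ℝ (⊤ : ℕ∞) (L i)) (q w : Pt n) :
    fderiv ℝ (lam L) q w = (w.1, fun b => fderiv ℝ (L b) q w) := by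
  have hd1 : DifferentiableAt ℝ (fun x : Pt n => x.1) q := differentiableAt_fst
  have hd2 : DifferentiableAt ℝ (fun x : Pt n => (fun i => L i x)) q :=
    differentiableAt_pi.mpr (fun i => diffAt (hL i) q)
  have h1 : fderiv ℝ (lam L) q =
      (fderiv ℝ (fun x : Pt n => x.1) q).prod
        (fderiv ℝ (fun x : Pt n => (fun i => L i x)) q) :=
    hd1.fderiv_prodMk hd2
  have h2 : fderiv ℝ (fun x : Pt n => (fun i => L i x)) q =
      ContinuousLinearMap.pi (fun i => fderiv ℝ (L i) q) :=
    fderiv_pi (fun i => diffAt (hL i) q)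
  rw [h1, h2]
  simp [ContinuousLinearMap.prod_apply, fderiv_fst]

/-- Linearity decomposition of the second slot. -/
lemma fderiv_snd_decomp (f : Pt n → ℝ) (p : Pt n) (w : Fin n → ℝ) :
    fderiv ℝ f p ((0 : Fin n → ℝ), w) = ∑ b, w b * pdv b f p := by
  have hw : ((0 : Fin n → ℝ), w) = ∑ b, w b • (((0 : Fin n → ℝ), Pi.single b 1) : Pt n) := by
    ext j
    · simp [Prod.fst_sum]
    · simp [Prod.snd_sum, Finset.sum_apply, Pi.single_apply, mul_ite,
        Finset.sum_ite_eq']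
  rw [hw, map_sum]
  refine Finset.sum_congr rfl (fun b _ => ?_)
  rw [map_smul]
  simp [pdv, smul_eq_mul]

lemma fderiv_split (f : Pt n → ℝ) (p : Pt n) (u w : Fin n → ℝ) :
    fderiv ℝ f p (u, w) = fderiv ℝ f p (u, 0) + fderiv ℝ f p (0, w) := by
  rw [← map_add]
  congr 1
  ext <;> simp

lemma chain_pdv {L : Fam n} (hL : ∀ i, ContDiff ℝ (⊤ : ℕ∞) (L i)) {f : Pt n → ℝ}
    {q : Pt n} (hf : DifferentiableAt ℝ f (lam L q)) (j : Fin n) :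
    pdv j (fun x => f (lam L x)) q = ∑ b, gdn L b j q * pdv b f (lam L q) := by
  have hc : fderiv ℝ (fun x => f (lam L x)) q =
      (fderiv ℝ f (lam L q)).comp (fderiv ℝ (lam L) q) :=
    fderiv_comp (x := q) hf (diffAt_lam hL q)
  have h1 : pdv j (fun x => f (lam L x)) q
      = fderiv ℝ f (lam L q) (fderiv ℝ (lam L) q (0, Pi.single j 1)) := by
    rw [pdv, hc]; rfl
  rw [h1, fderiv_lam_apply hL]
  have h2 : fderiv ℝ f (lam L q) ((0 : Fin n → ℝ), fun b => fderiv ℝ (L b) q (0, Pi.single j 1))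
      = ∑ b, (fun b => fderiv ℝ (L b) q (0, Pi.single j 1)) b * pdv b f (lam L q) :=
    fderiv_snd_decomp f (lam L q) _
  exact h2

lemma chain_pdx {L : Fam n} (hL : ∀ i, ContDiff ℝ (⊤ : ℕ∞) (L i)) {f : Pt n → ℝ}
    {q : Pt n} (hf : DifferentiableAt ℝ f (lam L q)) (m : Fin n) :
    pdx m (fun x => f (lam L x)) q
      = pdx m f (lam L q) + ∑ b, pdx m (L b) q * pdv b f (lam L q) := by
  have hc : fderiv ℝ (fun x => f (lam L x)) q =
      (fderiv ℝ f (lam L q)).comp (fderiv ℝ (lam L) q) :=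
    fderiv_comp (x := q) hf (diffAt_lam hL q)
  have h1 : pdx m (fun x => f (lam L x)) q
      = fderiv ℝ f (lam L q) (fderiv ℝ (lam L) q (Pi.single m 1, 0)) := by
    rw [pdx, hc]; rfl
  rw [h1, fderiv_lam_apply hL]
  rw [show ((Pi.single m 1 : Fin n → ℝ), (0 : Fin n → ℝ)).1 = (Pi.single m 1 : Fin n → ℝ) from rfl]
  rw [fderiv_split, fderiv_snd_decomp]
  rfl

end Stmt7Aux
namespace Stmt7Aux

open Finset

variable {n : ℕ}

lemma sum_kron_mul (i : Fin n) (f : Fin n → ℝ) : (∑ j, kron i j * f j) = f i := by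
  simp [kron, ite_mul]

lemma sum_mul_kron (i : Fin n) (f : Fin n → ℝ) : (∑ j, f j * kron j i) = f i := by
  simp [kron, mul_ite]

lemma sum_mul_kron' (i : Fin n) (f : Fin n → ℝ) : (∑ j, f j * kron i j) = f i := by
  simp [kron, mul_ite]

/-- Right inverse identity: Σ_r g_{sr} g^{rk} = δ_{sk}. -/
lemma ginv_right {L : Fam n} {ginv : Fin n → Fin n → Pt n → ℝ}
    (hginv : ∀ (q : Pt n) (s k : Fin n), (∑ r, ginv s r q * gdn L r k q) = kron s k)
    (q : Pt n) (s k : Fin n) :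
    (∑ r, gdn L s r q * ginv r k q) = kron s k := by
  classical
  set A : Matrix (Fin n) (Fin n) ℝ := Matrix.of (fun i j => ginv i j q) with hA
  set B : Matrix (Fin n) (Fin n) ℝ := Matrix.of (fun i j => gdn L i j q) with hB
  have hAB : A * B = 1 := by
    ext i j
    rw [Matrix.mul_apply]
    simp only [hA, hB, Matrix.of_apply]
    rw [hginv q i j]
    simp [kron, Matrix.one_apply]
  have hBA : B * A = 1 := mul_eq_one_comm.mp hAB
  have : (B * A) s k = (1 : Matrix (Fin n) (Fin n) ℝ) s k := by rw [hBA]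
  rw [Matrix.mul_apply] at this
  simp only [hA, hB, Matrix.of_apply] at this
  rw [this]
  simp [kron, Matrix.one_apply]

/-- Inverted chain rule for second-slot derivatives. -/
lemma inv_pdv {L : Fam n} {ginv : Fin n → Fin n → Pt n → ℝ}
    (hL : ∀ i, ContDiff ℝ (⊤ : ℕ∞) (L i))
    (hginv : ∀ (q : Pt n) (s k : Fin n), (∑ r, ginv s r q * gdn L r k q) = kron s k)
    {f : Pt n → ℝ} {q : Pt n} (hf : DifferentiableAt ℝ f (lam L q)) (b : Fin n) :
    pdv b f (lam L q) = ∑ j, pdv j (fun x => f (lam L x)) q * ginv j b q := by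
  have h1 : ∀ j, pdv j (fun x => f (lam L x)) q = ∑ c, gdn L c j q * pdv c f (lam L q) :=
    fun j => chain_pdv hL hf j
  calc pdv b f (lam L q)
      = ∑ c, kron c b * pdv c f (lam L q) := by
        rw [Finset.sum_eq_single b]
        · simp [kron]
        · intro c _ hc; simp [kron, hc]
        · intro h; exact absurd (Finset.mem_univ b) h
    _ = ∑ c, (∑ j, gdn L c j q * ginv j b q) * pdv c f (lam L q) := by
        refine Finset.sum_congr rfl (fun c _ => ?_)
        rw [ginv_right hginv]
    _ = ∑ j, pdv j (fun x => f (lam L x)) q * ginv j b q := by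
        simp only [Finset.sum_mul]
        rw [Finset.sum_comm]
        refine Finset.sum_congr rfl (fun j _ => ?_)
        rw [h1 j, Finset.sum_mul]
        exact Finset.sum_congr rfl (fun c _ => by ring)

/-- Inverted chain rule for first-slot derivatives. -/
lemma inv_pdx {L : Fam n} {ginv : Fin n → Fin n → Pt n → ℝ}
    (hL : ∀ i, ContDiff ℝ (⊤ : ℕ∞) (L i))
    (hginv : ∀ (q : Pt n) (s k : Fin n), (∑ r, ginv s r q * gdn L r k q) = kron s k)
    {f : Pt n → ℝ} {q : Pt n} (hf : DifferentiableAt ℝ f (lam L q)) (m : Fin n) :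
    pdx m f (lam L q) = pdx m (fun x => f (lam L x)) q
      - ∑ j, ∑ b, pdv j (fun x => f (lam L x)) q * ginv j b q * pdx m (L b) q := by
  have h1 := chain_pdx hL hf m
  have h2 : ∀ b, pdv b f (lam L q) = ∑ j, pdv j (fun x => f (lam L x)) q * ginv j b q :=
    fun b => inv_pdv hL hginv hf b
  have h3 : (∑ b, pdx m (L b) q * pdv b f (lam L q))
      = ∑ j, ∑ b, pdv j (fun x => f (lam L x)) q * ginv j b q * pdx m (L b) q := by
    rw [Finset.sum_comm]
    refine Finset.sum_congr rfl (fun b _ => ?_)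
    rw [h2 b, Finset.mul_sum]
    exact Finset.sum_congr rfl (fun j _ => by ring)
  rw [h1, ← h3]
  ring

end Stmt7Aux
namespace Stmt7Aux

open Finset

variable {n : ℕ}

lemma contDiff_pdx (m : Fin n) {f : Pt n → ℝ} (hf : ContDiff ℝ (⊤ : ℕ∞) f) :
    ContDiff ℝ (⊤ : ℕ∞) (pdx m f) := by
  rw [pdx_eq_pdd]; exact contDiff_pdd _ hf

lemma contDiff_pdv (m : Fin n) {f : Pt n → ℝ} (hf : ContDiff ℝ (⊤ : ℕ∞) f) :
    ContDiff ℝ (⊤ : ℕ∞) (pdv m f) := by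
  rw [pdv_eq_pdd]; exact contDiff_pdd _ hf

lemma contDiff_lamInv {V : Fam n} (hV : ∀ i, ContDiff ℝ (⊤ : ℕ∞) (V i)) :
    ContDiff ℝ (⊤ : ℕ∞) (lamInv V) := by
  apply ContDiff.prodMk
  · exact contDiff_fst
  · exact contDiff_pi.mpr (fun i => hV i)

lemma contDiff_Gp {Γ : Conn n} {V : Fam n} (hΓ : ∀ k i j, ContDiff ℝ (⊤ : ℕ∞) (Γ k i j))
    (hV : ∀ i, ContDiff ℝ (⊤ : ℕ∞) (V i)) (k i j : Fin n) :
    ContDiff ℝ (⊤ : ℕ∞) (Gp Γ V k i j) :=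
  (hΓ k i j).comp (contDiff_lamInv hV)

lemma contDiff_pS {G : Conn n} (hG : ∀ k i j, ContDiff ℝ (⊤ : ℕ∞) (G k i j))
    {f : Pt n → ℝ} (hf : ContDiff ℝ (⊤ : ℕ∞) f) (m : Fin n) :
    ContDiff ℝ (⊤ : ℕ∞) (pS G m f) := by
  apply ContDiff.add (contDiff_pdx m hf)
  apply ContDiff.sum; intro a _
  apply ContDiff.sum; intro b _
  exact ((contDiff_coord2 a).mul (hG a m b)).mul (contDiff_pdv b hf)

lemma contDiff_Qp {Θ : Fam n} {Γ : Conn n} {V : Fam n}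
    (hΘ : ∀ i, ContDiff ℝ (⊤ : ℕ∞) (Θ i))
    (hΓ : ∀ k i j, ContDiff ℝ (⊤ : ℕ∞) (Γ k i j))
    (hV : ∀ i, ContDiff ℝ (⊤ : ℕ∞) (V i)) (i : Fin n) :
    ContDiff ℝ (⊤ : ℕ∞) (Qp Θ Γ V i) := by
  apply ContDiff.sub (hΘ i)
  apply ContDiff.sum; intro j _
  apply ContDiff.sum; intro k _
  exact ((contDiff_Gp hΓ hV k i j).mul (hV j)).mul (contDiff_coord2 k)

lemma contDiff_pVecV {Γ : Conn n} {V : Fam n}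
    (hΓ : ∀ k i j, ContDiff ℝ (⊤ : ℕ∞) (Γ k i j))
    (hV : ∀ i, ContDiff ℝ (⊤ : ℕ∞) (V i)) (i s : Fin n) :
    ContDiff ℝ (⊤ : ℕ∞) (fun q => pVec (Gp Γ V) i V s q) := by
  apply ContDiff.add (contDiff_pS (contDiff_Gp hΓ hV) (hV s) i)
  apply ContDiff.sum; intro a _
  exact (contDiff_Gp hΓ hV s i a).mul (hV a)

lemma contDiff_Ucheck {Θ : Fam n} {Γ : Conn n} {V : Fam n}
    (hΘ : ∀ i, ContDiff ℝ (⊤ : ℕ∞) (Θ i))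
    (hΓ : ∀ k i j, ContDiff ℝ (⊤ : ℕ∞) (Γ k i j))
    (hV : ∀ i, ContDiff ℝ (⊤ : ℕ∞) (V i)) (k : Fin n) :
    ContDiff ℝ (⊤ : ℕ∞) (Ucheck Θ Γ V k) := by
  apply ContDiff.add (contDiff_Qp hΘ hΓ hV k)
  apply ContDiff.sum; intro s _
  exact (contDiff_pVecV hΓ hV k s).mul (contDiff_coord2 s)

end Stmt7Aux
namespace Stmt7Aux

open Finset

variable {n : ℕ}

lemma sum3_132 (f : Fin n → Fin n → Fin n → ℝ) :
    (∑ a, ∑ b, ∑ c, f a b c) = ∑ a, ∑ c, ∑ b, f a b c :=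
  Finset.sum_congr rfl (fun a _ => Finset.sum_comm)

lemma sum3_213 (f : Fin n → Fin n → Fin n → ℝ) :
    (∑ a, ∑ b, ∑ c, f a b c) = ∑ b, ∑ a, ∑ c, f a b c :=
  Finset.sum_comm

lemma sum3_231 (f : Fin n → Fin n → Fin n → ℝ) :
    (∑ a, ∑ b, ∑ c, f a b c) = ∑ b, ∑ c, ∑ a, f a b c := by
  rw [sum3_213]
  exact Finset.sum_congr rfl (fun b _ => Finset.sum_comm)

lemma sum3_312 (f : Fin n → Fin n → Fin n → ℝ) :
    (∑ a, ∑ b, ∑ c, f a b c) = ∑ c, ∑ a, ∑ b, f a b c := by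
  rw [sum3_132]
  exact Finset.sum_comm

lemma sum3_321 (f : Fin n → Fin n → Fin n → ℝ) :
    (∑ a, ∑ b, ∑ c, f a b c) = ∑ c, ∑ b, ∑ a, f a b c := by
  rw [sum3_312]
  exact Finset.sum_congr rfl (fun c _ => Finset.sum_comm)

section Hats

variable {L V : Fam n} {ginv : Fin n → Fin n → Pt n → ℝ} {Γ : Conn n} {Φ Θ : Fam n}

lemma Gp_hat (hLeft : ∀ q : Pt n, lamInv V (lam L q) = q) (k i j : Fin n) (q : Pt n) :
    Gp Γ V k i j (lam L q) = Γ k i j q := by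
  rw [Gp, hLeft]

lemma V_hat (hLeft : ∀ q : Pt n, lamInv V (lam L q) = q) (s : Fin n) (q : Pt n) :
    V s (lam L q) = q.2 s :=
  congrFun (congrArg Prod.snd (hLeft q)) s

lemma V_hat_fun (hLeft : ∀ q : Pt n, lamInv V (lam L q) = q) (s : Fin n) :
    (fun x => V s (lam L x)) = (fun x : Pt n => x.2 s) :=
  funext (fun x => V_hat hLeft s x)

lemma pdv_coord2 (j s : Fin n) (q : Pt n) :
    pdv j (fun x : Pt n => x.2 s) q = kron s j := by
  rw [pdv_eq_pdd, pdd_coord2]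
  simp [kron, Pi.single_apply]

lemma pdx_coord2 (m s : Fin n) (q : Pt n) :
    pdx m (fun x : Pt n => x.2 s) q = 0 := by
  rw [pdx_eq_pdd, pdd_coord2]
  rfl

lemma pdv_V_hat (hL : ∀ i, ContDiff ℝ (⊤ : ℕ∞) (L i))
    (hV : ∀ i, ContDiff ℝ (⊤ : ℕ∞) (V i))
    (hginv : ∀ (q : Pt n) (s k : Fin n), (∑ r, ginv s r q * gdn L r k q) = kron s k)
    (hLeft : ∀ q : Pt n, lamInv V (lam L q) = q) (s b : Fin n) (q : Pt n) :
    pdv b (V s) (lam L q) = ginv s b q := by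
  rw [inv_pdv hL hginv (diffAt (hV s) _) b]
  rw [show (fun x => V s (lam L x)) = (fun x : Pt n => x.2 s) from V_hat_fun hLeft s]
  calc (∑ j, pdv j (fun x : Pt n => x.2 s) q * ginv j b q)
      = ∑ j, kron s j * ginv j b q :=
        Finset.sum_congr rfl (fun j _ => by rw [pdv_coord2])
    _ = ginv s b q := sum_kron_mul s _

lemma pdx_V_hat (hL : ∀ i, ContDiff ℝ (⊤ : ℕ∞) (L i))
    (hV : ∀ i, ContDiff ℝ (⊤ : ℕ∞) (V i))
    (hginv : ∀ (q : Pt n) (s k : Fin n), (∑ r, ginv s r q * gdn L r k q) = kron s k)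
    (hLeft : ∀ q : Pt n, lamInv V (lam L q) = q) (s m : Fin n) (q : Pt n) :
    pdx m (V s) (lam L q) = -∑ b, ginv s b q * pdx m (L b) q := by
  rw [inv_pdx hL hginv (diffAt (hV s) _) m]
  rw [show (fun x => V s (lam L x)) = (fun x : Pt n => x.2 s) from V_hat_fun hLeft s]
  rw [pdx_coord2]
  rw [show (∑ j, ∑ b, pdv j (fun x : Pt n => x.2 s) q * ginv j b q * pdx m (L b) q)
      = ∑ j, ∑ b, kron s j * (ginv j b q * pdx m (L b) q) from
    Finset.sum_congr rfl (fun j _ => Finset.sum_congr rfl (fun b _ => by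
      rw [pdv_coord2]; ring))]
  rw [show (∑ j, ∑ b, kron s j * (ginv j b q * pdx m (L b) q))
      = ∑ j, kron s j * ∑ b, ginv j b q * pdx m (L b) q from
    Finset.sum_congr rfl (fun j _ => by rw [Finset.mul_sum])]
  rw [sum_kron_mul s (fun j => ∑ b, ginv j b q * pdx m (L b) q)]
  ring

lemma lam_snd (s : Fin n) (q : Pt n) : (lam L q).2 s = L s q := rfl

lemma Wp_hat (hL : ∀ i, ContDiff ℝ (⊤ : ℕ∞) (L i))
    (hV : ∀ i, ContDiff ℝ (⊤ : ℕ∞) (V i))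
    (hginv : ∀ (q : Pt n) (s k : Fin n), (∑ r, ginv s r q * gdn L r k q) = kron s k)
    (hLeft : ∀ q : Pt n, lamInv V (lam L q) = q) (i : Fin n) (q : Pt n) :
    Wp V i (lam L q) = Lup L ginv i q := by
  rw [Wp, Lup]
  exact Finset.sum_congr rfl (fun s _ => by
    rw [lam_snd, pdv_V_hat hL hV hginv hLeft])

end Hats

end Stmt7Aux
namespace Stmt7Aux

open Finset

variable {n : ℕ}

section Hats2

variable {L V : Fam n} {ginv : Fin n → Fin n → Pt n → ℝ} {Γ : Conn n} {Φ Θ : Fam n}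

lemma Qp_hat
    (hLeft : ∀ q : Pt n, lamInv V (lam L q) = q)
    (hΓsym : ∀ (k i j : Fin n) (q : Pt n), Γ k i j q = Γ k j i q)
    (hΘdef : ∀ (q : Pt n) (i : Fin n),
      Θ i (lam L q) = (∑ s, pdx s (L i) q * q.2 s) + (∑ s, pdv s (L i) q * Φ s q))
    (r : Fin n) (q : Pt n) :
    Qp Θ Γ V r (lam L q) = (∑ m, q.2 m * vCov Γ m L r q) + Fcov L Γ Φ r q := by
  have h0 : Qp Θ Γ V r (lam L q)
      = Θ r (lam L q) - ∑ j, ∑ k, Γ k r j q * q.2 j * L k q := by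
    rw [Qp]
    congr 1
    refine Finset.sum_congr rfl fun j _ => Finset.sum_congr rfl fun k _ => ?_
    rw [Gp_hat hLeft, V_hat hLeft, lam_snd]
  rw [h0, hΘdef q r]
  have hsplit1 : (∑ m, q.2 m * vCov Γ m L r q)
      = (∑ m, q.2 m * pdx m (L r) q)
        - (∑ m, ∑ a, ∑ b, q.2 m * (q.2 a * Γ b a m q * pdv b (L r) q))
        - (∑ m, ∑ b, q.2 m * (Γ b m r q * L b q)) := by
    rw [← Finset.sum_sub_distrib, ← Finset.sum_sub_distrib]
    refine Finset.sum_congr rfl fun m _ => ?_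
    simp only [vCov, vS, mul_sub, Finset.mul_sum]
  have hsplit2 : Fcov L Γ Φ r q
      = (∑ j, pdv j (L r) q * Φ j q)
        + (∑ j, ∑ a, ∑ b, pdv j (L r) q * (Γ j a b q * q.2 a * q.2 b)) := by
    rw [← Finset.sum_add_distrib]
    refine Finset.sum_congr rfl fun j _ => ?_
    simp only [Fcov, Fvec, gdn, mul_add, Finset.mul_sum]
  rw [hsplit1, hsplit2]
  have e1 : (∑ m, q.2 m * pdx m (L r) q) = ∑ s, pdx s (L r) q * q.2 s :=
    Finset.sum_congr rfl (fun m _ => by ring)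
  have e3 : (∑ m, ∑ b, q.2 m * (Γ b m r q * L b q))
      = ∑ j, ∑ k, Γ k r j q * q.2 j * L k q := by
    refine Finset.sum_congr rfl fun j _ => Finset.sum_congr rfl fun k _ => ?_
    rw [hΓsym k j r q]
    ring
  have e2 : (∑ m, ∑ a, ∑ b, q.2 m * (q.2 a * Γ b a m q * pdv b (L r) q))
      = ∑ j, ∑ a, ∑ b, pdv j (L r) q * (Γ j a b q * q.2 a * q.2 b) := by
    rw [sum3_231 (fun j a b => pdv j (L r) q * (Γ j a b q * q.2 a * q.2 b))]
    refine Finset.sum_congr rfl fun m _ => Finset.sum_congr rfl fun a _ =>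
      Finset.sum_congr rfl fun b _ => ?_
    rw [hΓsym b a m q]
    ring
  linarith [e1, e2, e3]

end Hats2

end Stmt7Aux

namespace Stmt7Aux

open Finset

variable {n : ℕ}

section Hats3

variable {L V : Fam n} {ginv : Fin n → Fin n → Pt n → ℝ} {Γ : Conn n} {Φ Θ : Fam n}

lemma pVecV_hat (hL : ∀ i, ContDiff ℝ (⊤ : ℕ∞) (L i))
    (hV : ∀ i, ContDiff ℝ (⊤ : ℕ∞) (V i))
    (hginv : ∀ (q : Pt n) (s k : Fin n), (∑ r, ginv s r q * gdn L r k q) = kron s k)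
    (hLeft : ∀ q : Pt n, lamInv V (lam L q) = q)
    (hΓsym : ∀ (k i j : Fin n) (q : Pt n), Γ k i j q = Γ k j i q)
    (i s : Fin n) (q : Pt n) :
    pVec (Gp Γ V) i V s (lam L q) = -∑ m, ginv s m q * vCov Γ i L m q := by
  have h1 : pVec (Gp Γ V) i V s (lam L q)
      = ((-∑ b, ginv s b q * pdx i (L b) q)
        + ∑ a, ∑ b, L a q * Γ a i b q * ginv s b q)
        + ∑ a, Γ s i a q * q.2 a := by
    rw [pVec, pS, pdx_V_hat hL hV hginv hLeft]
    congr 1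
    · congr 1
      refine Finset.sum_congr rfl fun a _ => Finset.sum_congr rfl fun b _ => ?_
      rw [Gp_hat hLeft, pdv_V_hat hL hV hginv hLeft, lam_snd]
    · refine Finset.sum_congr rfl fun a _ => ?_
      rw [Gp_hat hLeft, V_hat hLeft]
  have h2 : (-∑ m, ginv s m q * vCov Γ i L m q)
      = (-∑ m, ginv s m q * pdx i (L m) q)
        + (∑ m, ∑ a, ∑ b, ginv s m q * (q.2 a * Γ b a i q * pdv b (L m) q))
        + (∑ m, ∑ b, ginv s m q * (Γ b i m q * L b q)) := by
    have hm : ∀ m, ginv s m q * vCov Γ i L m q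
        = ginv s m q * pdx i (L m) q
          - (∑ a, ∑ b, ginv s m q * (q.2 a * Γ b a i q * pdv b (L m) q))
          - (∑ b, ginv s m q * (Γ b i m q * L b q)) := fun m => by
      simp only [vCov, vS, mul_sub, Finset.mul_sum]
    rw [Finset.sum_congr rfl (fun m _ => hm m), Finset.sum_sub_distrib,
      Finset.sum_sub_distrib]
    ring
  have e1 : (∑ m, ∑ a, ∑ b, ginv s m q * (q.2 a * Γ b a i q * pdv b (L m) q))
      = ∑ a, Γ s i a q * q.2 a := by
    rw [sum3_231 (fun m a b => ginv s m q * (q.2 a * Γ b a i q * pdv b (L m) q))]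
    have inner : ∀ a b, (∑ m, ginv s m q * (q.2 a * Γ b a i q * pdv b (L m) q))
        = q.2 a * Γ b a i q * kron s b := by
      intro a b
      rw [show (∑ m, ginv s m q * (q.2 a * Γ b a i q * pdv b (L m) q))
          = q.2 a * Γ b a i q * ∑ m, ginv s m q * gdn L m b q by
        rw [Finset.mul_sum]
        exact Finset.sum_congr rfl fun m _ => by rw [gdn]; ring]
      rw [hginv]
    rw [Finset.sum_congr rfl (fun a _ => Finset.sum_congr rfl (fun b _ => inner a b))]
    refine Finset.sum_congr rfl fun a _ => ?_
    rw [show (∑ b, q.2 a * Γ b a i q * kron s b)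
        = ∑ b, (fun b => q.2 a * Γ b a i q) b * kron s b from rfl]
    rw [sum_mul_kron' s (fun b => q.2 a * Γ b a i q)]
    rw [hΓsym s a i q]
    ring
  have e2 : (∑ m, ∑ b, ginv s m q * (Γ b i m q * L b q))
      = ∑ a, ∑ b, L a q * Γ a i b q * ginv s b q := by
    rw [Finset.sum_comm]
    refine Finset.sum_congr rfl fun b _ => Finset.sum_congr rfl fun m _ => ?_
    ring
  linarith [e1, e2]

lemma Ucheck_hat (hL : ∀ i, ContDiff ℝ (⊤ : ℕ∞) (L i))
    (hV : ∀ i, ContDiff ℝ (⊤ : ℕ∞) (V i))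
    (hginv : ∀ (q : Pt n) (s k : Fin n), (∑ r, ginv s r q * gdn L r k q) = kron s k)
    (hLeft : ∀ q : Pt n, lamInv V (lam L q) = q)
    (hΓsym : ∀ (k i j : Fin n) (q : Pt n), Γ k i j q = Γ k j i q)
    (hΘdef : ∀ (q : Pt n) (i : Fin n),
      Θ i (lam L q) = (∑ s, pdx s (L i) q * q.2 s) + (∑ s, pdv s (L i) q * Φ s q))
    (k : Fin n) (q : Pt n) :
    Ucheck Θ Γ V k (lam L q) = Uv L ginv Γ Φ k q := by
  rw [Ucheck, Qp_hat hLeft hΓsym hΘdef]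
  have h1 : (∑ s, pVec (Gp Γ V) k V s (lam L q) * (lam L q).2 s)
      = -∑ j, Lup L ginv j q * vCov Γ k L j q := by
    calc (∑ s, pVec (Gp Γ V) k V s (lam L q) * (lam L q).2 s)
        = ∑ s, (-∑ m, ginv s m q * vCov Γ k L m q) * L s q :=
          Finset.sum_congr rfl fun s _ => by
            rw [pVecV_hat hL hV hginv hLeft hΓsym, lam_snd]
      _ = ∑ s, ∑ m, -(L s q * ginv s m q * vCov Γ k L m q) := by
          refine Finset.sum_congr rfl fun s _ => ?_
          rw [neg_mul, Finset.sum_mul, ← Finset.sum_neg_distrib]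
          exact Finset.sum_congr rfl fun m _ => by ring
      _ = ∑ m, ∑ s, -(L s q * ginv s m q * vCov Γ k L m q) := Finset.sum_comm
      _ = -∑ j, Lup L ginv j q * vCov Γ k L j q := by
          rw [← Finset.sum_neg_distrib]
          refine Finset.sum_congr rfl fun j _ => ?_
          rw [Lup, Finset.sum_mul, ← Finset.sum_neg_distrib]
  rw [h1, Uv]
  ring

end Hats3

end Stmt7Aux
namespace Stmt7Aux

open Finset

variable {n : ℕ}

section Master

variable {L V : Fam n} {ginv : Fin n → Fin n → Pt n → ℝ} {Γ : Conn n}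

lemma master_pdv (hL : ∀ i, ContDiff ℝ (⊤ : ℕ∞) (L i))
    (hginv : ∀ (q : Pt n) (s k : Fin n), (∑ r, ginv s r q * gdn L r k q) = kron s k)
    {f E : Pt n → ℝ} {q : Pt n} (hf : DifferentiableAt ℝ f (lam L q))
    (hfe : (fun x => f (lam L x)) = E) (r : Fin n) :
    pdv r f (lam L q) = ∑ j, pdv j E q * ginv j r q := by
  rw [inv_pdv hL hginv hf r, hfe]

lemma master_pS (hL : ∀ i, ContDiff ℝ (⊤ : ℕ∞) (L i))
    (hginv : ∀ (q : Pt n) (s k : Fin n), (∑ r, ginv s r q * gdn L r k q) = kron s k)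
    (hLeft : ∀ q : Pt n, lamInv V (lam L q) = q)
    {f E : Pt n → ℝ} {q : Pt n} (hf : DifferentiableAt ℝ f (lam L q))
    (hfe : (fun x => f (lam L x)) = E) (m : Fin n) :
    pS (Gp Γ V) m f (lam L q)
      = vS Γ m E q - ∑ j, ∑ s, pdv j E q * ginv j s q * vCov Γ m L s q := by
  have hLdec : pS (Gp Γ V) m f (lam L q)
      = (pdx m E q - ∑ j, ∑ b, pdv j E q * ginv j b q * pdx m (L b) q)
        + ∑ a, ∑ b, ∑ j, L a q * Γ a m b q * (pdv j E q * ginv j b q) := by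
    rw [pS, inv_pdx hL hginv hf m, hfe]
    congr 1
    refine Finset.sum_congr rfl fun a _ => Finset.sum_congr rfl fun b _ => ?_
    rw [lam_snd, Gp_hat hLeft, master_pdv hL hginv hf hfe b, Finset.mul_sum]
  have hRdec : (∑ j, ∑ s, pdv j E q * ginv j s q * vCov Γ m L s q)
      = (∑ j, ∑ s, pdv j E q * ginv j s q * pdx m (L s) q)
        - (∑ j, ∑ s, ∑ a, ∑ b,
            pdv j E q * ginv j s q * (q.2 a * Γ b a m q * pdv b (L s) q))
        - (∑ j, ∑ s, ∑ b, pdv j E q * ginv j s q * (Γ b m s q * L b q)) := by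
    calc (∑ j, ∑ s, pdv j E q * ginv j s q * vCov Γ m L s q)
        = ∑ j, ∑ s, (pdv j E q * ginv j s q * pdx m (L s) q
            - (∑ a, ∑ b, pdv j E q * ginv j s q * (q.2 a * Γ b a m q * pdv b (L s) q))
            - (∑ b, pdv j E q * ginv j s q * (Γ b m s q * L b q))) :=
          Finset.sum_congr rfl fun j _ => Finset.sum_congr rfl fun s _ => by
            simp only [vCov, vS, mul_sub, Finset.mul_sum]
      _ = _ := by simp only [Finset.sum_sub_distrib]
  have e3 : (∑ j, ∑ s, ∑ a, ∑ b,
        pdv j E q * ginv j s q * (q.2 a * Γ b a m q * pdv b (L s) q))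
      = ∑ a, ∑ b, q.2 a * Γ b a m q * pdv b E q := by
    have hj : ∀ j, (∑ s, ∑ a, ∑ b,
          pdv j E q * ginv j s q * (q.2 a * Γ b a m q * pdv b (L s) q))
        = ∑ a, ∑ b, pdv j E q * (q.2 a * Γ b a m q) * kron j b := by
      intro j
      rw [sum3_231 (fun s a b =>
        pdv j E q * ginv j s q * (q.2 a * Γ b a m q * pdv b (L s) q))]
      refine Finset.sum_congr rfl fun a _ => Finset.sum_congr rfl fun b _ => ?_
      rw [show (∑ s, pdv j E q * ginv j s q * (q.2 a * Γ b a m q * pdv b (L s) q))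
          = pdv j E q * (q.2 a * Γ b a m q) * ∑ s, ginv j s q * gdn L s b q by
        rw [Finset.mul_sum]
        exact Finset.sum_congr rfl fun s _ => by rw [gdn]; ring]
      rw [hginv]
    rw [Finset.sum_congr rfl fun j _ => hj j]
    rw [sum3_231 (fun j a b => pdv j E q * (q.2 a * Γ b a m q) * kron j b)]
    refine Finset.sum_congr rfl fun a _ => Finset.sum_congr rfl fun b _ => ?_
    rw [show (∑ j, pdv j E q * (q.2 a * Γ b a m q) * kron j b)
        = ∑ j, (fun j => pdv j E q * (q.2 a * Γ b a m q)) j * kron j b from rfl]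
    rw [sum_mul_kron b (fun j => pdv j E q * (q.2 a * Γ b a m q))]
    ring
  have e4 : (∑ j, ∑ s, ∑ b, pdv j E q * ginv j s q * (Γ b m s q * L b q))
      = ∑ a, ∑ b, ∑ j, L a q * Γ a m b q * (pdv j E q * ginv j b q) := by
    rw [sum3_321 (fun j s b => pdv j E q * ginv j s q * (Γ b m s q * L b q))]
    refine Finset.sum_congr rfl fun a _ => Finset.sum_congr rfl fun b _ =>
      Finset.sum_congr rfl fun j _ => ?_
    ring
  have hvS : vS Γ m E q = pdx m E q - ∑ a, ∑ b, q.2 a * Γ b a m q * pdv b E q := rfl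
  rw [hLdec, hRdec, hvS]
  linarith [e3, e4]

lemma master_pCov (hL : ∀ i, ContDiff ℝ (⊤ : ℕ∞) (L i))
    (hginv : ∀ (q : Pt n) (s k : Fin n), (∑ r, ginv s r q * gdn L r k q) = kron s k)
    (hLeft : ∀ q : Pt n, lamInv V (lam L q) = q)
    {X : Fam n} {EX : Fam n} {q : Pt n} (k : Fin n)
    (hf : DifferentiableAt ℝ (X k) (lam L q))
    (hfe : (fun x => X k (lam L x)) = EX k)
    (hXb : ∀ b, X b (lam L q) = EX b q) (m : Fin n) :
    pCov (Gp Γ V) m X k (lam L q)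
      = vCov Γ m EX k q - ∑ j, ∑ s, pdv j (EX k) q * ginv j s q * vCov Γ m L s q := by
  rw [pCov, master_pS hL hginv hLeft hf hfe m, vCov]
  rw [show (∑ b, Gp Γ V b m k (lam L q) * X b (lam L q)) = ∑ b, Γ b m k q * EX b q from
    Finset.sum_congr rfl fun b _ => by rw [Gp_hat hLeft, hXb b]]
  ring

end Master

end Stmt7Aux
namespace Stmt7Aux

open Finset

variable {n : ℕ}

section Curv

variable {L V : Fam n} {ginv : Fin n → Fin n → Pt n → ℝ} {Γ : Conn n}

lemma Gp_hat_fun (hLeft : ∀ q : Pt n, lamInv V (lam L q) = q) (k i j : Fin n) :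
    (fun x => Gp Γ V k i j (lam L x)) = Γ k i j :=
  funext (fun x => Gp_hat hLeft k i j x)

lemma Dp_hat (hL : ∀ i, ContDiff ℝ (⊤ : ℕ∞) (L i))
    (hV : ∀ i, ContDiff ℝ (⊤ : ℕ∞) (V i))
    (hΓ : ∀ k i j, ContDiff ℝ (⊤ : ℕ∞) (Γ k i j))
    (hginv : ∀ (q : Pt n) (s k : Fin n), (∑ r, ginv s r q * gdn L r k q) = kron s k)
    (hLeft : ∀ q : Pt n, lamInv V (lam L q) = q)
    (k r i j : Fin n) (q : Pt n) :
    Dp (Gp Γ V) k r i j (lam L q) = ∑ a, ginv a r q * Dv Γ k j i a q := by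
  rw [Dp, master_pdv hL hginv (diffAt (contDiff_Gp hΓ hV k i j) _) (Gp_hat_fun hLeft k i j) r]
  rw [← Finset.sum_neg_distrib]
  exact Finset.sum_congr rfl fun a _ => by rw [Dv]; ring

lemma Rp_half (hL : ∀ i, ContDiff ℝ (⊤ : ℕ∞) (L i))
    (hV : ∀ i, ContDiff ℝ (⊤ : ℕ∞) (V i))
    (hΓ : ∀ k i j, ContDiff ℝ (⊤ : ℕ∞) (Γ k i j))
    (hginv : ∀ (q : Pt n) (s k : Fin n), (∑ r, ginv s r q * gdn L r k q) = kron s k)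
    (hLeft : ∀ q : Pt n, lamInv V (lam L q) = q)
    (hΓsym : ∀ (k i j : Fin n) (q : Pt n), Γ k i j q = Γ k j i q)
    (i j k r : Fin n) (q : Pt n) :
    pdx i (Gp Γ V k j r) (lam L q)
      + (∑ m, ∑ s, (lam L q).2 s * Gp Γ V s m i (lam L q) * pdv m (Gp Γ V k j r) (lam L q))
    = pdx i (Γ k j r) q - (∑ m, ∑ s, q.2 s * Γ m i s q * pdv m (Γ k j r) q)
      + (∑ a, ∑ s, ginv a s q * vCov Γ i L s q * Dv Γ k r j a q) := by
  have hdf := diffAt (contDiff_Gp hΓ hV k j r) (lam L q)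
  have hfe := Gp_hat_fun (V := V) (Γ := Γ) hLeft k j r
  have h1 : pdx i (Gp Γ V k j r) (lam L q)
      = pdx i (Γ k j r) q
        - ∑ a, ∑ b, pdv a (Γ k j r) q * ginv a b q * pdx i (L b) q := by
    rw [inv_pdx hL hginv hdf i, hfe]
  have h2 : (∑ m, ∑ s, (lam L q).2 s * Gp Γ V s m i (lam L q)
        * pdv m (Gp Γ V k j r) (lam L q))
      = ∑ m, ∑ s, ∑ a, L s q * Γ s m i q * (pdv a (Γ k j r) q * ginv a m q) := by
    refine Finset.sum_congr rfl fun m _ => Finset.sum_congr rfl fun s _ => ?_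
    rw [lam_snd, Gp_hat hLeft, master_pdv hL hginv hdf hfe m, Finset.mul_sum]
  have h3 : (∑ a, ∑ s, ginv a s q * vCov Γ i L s q * Dv Γ k r j a q)
      = -(∑ a, ∑ s, ginv a s q * pdx i (L s) q * pdv a (Γ k j r) q)
        + (∑ a, ∑ s, ∑ c, ∑ d,
            ginv a s q * (q.2 c * Γ d c i q * pdv d (L s) q) * pdv a (Γ k j r) q)
        + (∑ a, ∑ s, ∑ d,
            ginv a s q * (Γ d i s q * L d q) * pdv a (Γ k j r) q) := by
    calc (∑ a, ∑ s, ginv a s q * vCov Γ i L s q * Dv Γ k r j a q)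
        = ∑ a, ∑ s, (-(ginv a s q * pdx i (L s) q * pdv a (Γ k j r) q)
            + (∑ c, ∑ d, ginv a s q * (q.2 c * Γ d c i q * pdv d (L s) q)
                * pdv a (Γ k j r) q)
            + (∑ d, ginv a s q * (Γ d i s q * L d q) * pdv a (Γ k j r) q)) := by
          refine Finset.sum_congr rfl fun a _ => Finset.sum_congr rfl fun s _ => ?_
          simp only [Dv, vCov, vS, mul_sub, sub_mul, mul_neg, neg_mul,
            Finset.sum_mul, Finset.mul_sum]
          ring
      _ = _ := by
          simp only [Finset.sum_add_distrib, Finset.sum_neg_distrib]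
  have e2 : (∑ a, ∑ s, ∑ c, ∑ d,
        ginv a s q * (q.2 c * Γ d c i q * pdv d (L s) q) * pdv a (Γ k j r) q)
      = ∑ m, ∑ s, q.2 s * Γ m i s q * pdv m (Γ k j r) q := by
    have ha : ∀ a, (∑ s, ∑ c, ∑ d,
          ginv a s q * (q.2 c * Γ d c i q * pdv d (L s) q) * pdv a (Γ k j r) q)
        = ∑ c, ∑ d, (fun d => q.2 c * Γ d c i q * pdv a (Γ k j r) q) d * kron a d := by
      intro a
      rw [sum3_231 (fun s c d =>
        ginv a s q * (q.2 c * Γ d c i q * pdv d (L s) q) * pdv a (Γ k j r) q)]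
      refine Finset.sum_congr rfl fun c _ => Finset.sum_congr rfl fun d _ => ?_
      rw [show (∑ s, ginv a s q * (q.2 c * Γ d c i q * pdv d (L s) q)
            * pdv a (Γ k j r) q)
          = q.2 c * Γ d c i q * pdv a (Γ k j r) q * ∑ s, ginv a s q * gdn L s d q by
        rw [Finset.mul_sum]
        exact Finset.sum_congr rfl fun s _ => by rw [gdn]; ring]
      rw [hginv]
    rw [Finset.sum_congr rfl fun a _ => ha a]
    rw [sum3_231 (fun a c d =>
      (fun d => q.2 c * Γ d c i q * pdv a (Γ k j r) q) d * kron a d)]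
    have hcd : ∀ c d, (∑ a, (fun d => q.2 c * Γ d c i q * pdv a (Γ k j r) q) d * kron a d)
        = q.2 c * Γ d c i q * pdv d (Γ k j r) q := by
      intro c d
      rw [show (∑ a, (fun d' => q.2 c * Γ d' c i q * pdv a (Γ k j r) q) d * kron a d)
          = ∑ a, (fun a => q.2 c * Γ d c i q * pdv a (Γ k j r) q) a * kron a d from rfl]
      rw [sum_mul_kron d (fun a => q.2 c * Γ d c i q * pdv a (Γ k j r) q)]
    rw [Finset.sum_congr rfl fun c _ => Finset.sum_congr rfl fun d _ => hcd c d]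
    rw [Finset.sum_comm]
    refine Finset.sum_congr rfl fun m _ => Finset.sum_congr rfl fun s _ => ?_
    rw [hΓsym m s i q]
  have e3 : (∑ a, ∑ s, ∑ d, ginv a s q * (Γ d i s q * L d q) * pdv a (Γ k j r) q)
      = ∑ m, ∑ s, ∑ a, L s q * Γ s m i q * (pdv a (Γ k j r) q * ginv a m q) := by
    rw [sum3_231 (fun a s d => ginv a s q * (Γ d i s q * L d q) * pdv a (Γ k j r) q)]
    refine Finset.sum_congr rfl fun m _ => Finset.sum_congr rfl fun s _ =>
      Finset.sum_congr rfl fun a _ => ?_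
    rw [hΓsym s i m q]
    ring
  rw [h1, h2, h3]
  linarith [e2, e3,
    show (∑ a, ∑ s, ginv a s q * pdx i (L s) q * pdv a (Γ k j r) q)
        = ∑ a, ∑ b, pdv a (Γ k j r) q * ginv a b q * pdx i (L b) q from
      Finset.sum_congr rfl fun a _ => Finset.sum_congr rfl fun b _ => by ring]

lemma Rp_hat (hL : ∀ i, ContDiff ℝ (⊤ : ℕ∞) (L i))
    (hV : ∀ i, ContDiff ℝ (⊤ : ℕ∞) (V i))
    (hΓ : ∀ k i j, ContDiff ℝ (⊤ : ℕ∞) (Γ k i j))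
    (hginv : ∀ (q : Pt n) (s k : Fin n), (∑ r, ginv s r q * gdn L r k q) = kron s k)
    (hLeft : ∀ q : Pt n, lamInv V (lam L q) = q)
    (hΓsym : ∀ (k i j : Fin n) (q : Pt n), Γ k i j q = Γ k j i q)
    (k r i j : Fin n) (q : Pt n) :
    Rp (Gp Γ V) k r i j (lam L q)
      = Rv Γ k r i j q
        + (∑ a, ∑ s, ginv a s q * vCov Γ i L s q * Dv Γ k r j a q)
        - (∑ a, ∑ s, ginv a s q * vCov Γ j L s q * Dv Γ k r i a q) := by
  have hmid : (∑ m, (Gp Γ V k i m (lam L q) * Gp Γ V m j r (lam L q)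
        - Gp Γ V k j m (lam L q) * Gp Γ V m i r (lam L q)))
      = ∑ m, (Γ k i m q * Γ m j r q - Γ k j m q * Γ m i r q) :=
    Finset.sum_congr rfl fun m _ => by rw [Gp_hat hLeft, Gp_hat hLeft, Gp_hat hLeft,
      Gp_hat hLeft]
  have half1 := Rp_half hL hV hΓ hginv hLeft hΓsym i j k r q
  have half2 := Rp_half hL hV hΓ hginv hLeft hΓsym j i k r q
  rw [Rp, Rv] at *
  linarith [hmid, half1, half2]

end Curv

end Stmt7Aux
namespace Stmt7Aux

open Finset

variable {n : ℕ}

lemma sum_kron_mul_left (i : Fin n) (f : Fin n → ℝ) : (∑ j, kron j i * f j) = f i := by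
  simp [kron, ite_mul]

section QhatSec

variable {L V : Fam n} {ginv : Fin n → Fin n → Pt n → ℝ} {Γ : Conn n} {Φ Θ : Fam n}

lemma contDiff_vS {G : Conn n} (hG : ∀ k i j, ContDiff ℝ (⊤ : ℕ∞) (G k i j))
    {f : Pt n → ℝ} (hf : ContDiff ℝ (⊤ : ℕ∞) f) (m : Fin n) :
    ContDiff ℝ (⊤ : ℕ∞) (vS G m f) := by
  apply ContDiff.sub (contDiff_pdx m hf)
  apply ContDiff.sum; intro a _
  apply ContDiff.sum; intro b _
  exact ((contDiff_coord2 a).mul (hG b a m)).mul (contDiff_pdv b hf)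

lemma contDiff_vCovL (hL : ∀ i, ContDiff ℝ (⊤ : ℕ∞) (L i))
    (hΓ : ∀ k i j, ContDiff ℝ (⊤ : ℕ∞) (Γ k i j)) (m r : Fin n) :
    ContDiff ℝ (⊤ : ℕ∞) (vCov Γ m L r) := by
  apply ContDiff.sub (contDiff_vS hΓ (hL r) m)
  apply ContDiff.sum; intro b _
  exact (hΓ b m r).mul (hL b)

lemma contDiff_Fvec (hΓ : ∀ k i j, ContDiff ℝ (⊤ : ℕ∞) (Γ k i j))
    (hΦ : ∀ i, ContDiff ℝ (⊤ : ℕ∞) (Φ i)) (j : Fin n) :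
    ContDiff ℝ (⊤ : ℕ∞) (Fvec Γ Φ j) := by
  apply ContDiff.add (hΦ j)
  apply ContDiff.sum; intro a _
  apply ContDiff.sum; intro b _
  exact ((hΓ j a b).mul (contDiff_coord2 a)).mul (contDiff_coord2 b)

lemma contDiff_Fcov (hL : ∀ i, ContDiff ℝ (⊤ : ℕ∞) (L i))
    (hΓ : ∀ k i j, ContDiff ℝ (⊤ : ℕ∞) (Γ k i j))
    (hΦ : ∀ i, ContDiff ℝ (⊤ : ℕ∞) (Φ i)) (r : Fin n) :
    ContDiff ℝ (⊤ : ℕ∞) (Fcov L Γ Φ r) := by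
  apply ContDiff.sum; intro j _
  exact (contDiff_pdv j (hL r)).mul (contDiff_Fvec hΓ hΦ j)

lemma contDiff_Qhat (hL : ∀ i, ContDiff ℝ (⊤ : ℕ∞) (L i))
    (hΓ : ∀ k i j, ContDiff ℝ (⊤ : ℕ∞) (Γ k i j))
    (hΦ : ∀ i, ContDiff ℝ (⊤ : ℕ∞) (Φ i)) (r : Fin n) :
    ContDiff ℝ (⊤ : ℕ∞)
      (fun x => (∑ m, x.2 m * vCov Γ m L r x) + Fcov L Γ Φ r x) := by
  apply ContDiff.add _ (contDiff_Fcov hL hΓ hΦ r)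
  apply ContDiff.sum; intro m _
  exact (contDiff_coord2 m).mul (contDiff_vCovL hL hΓ m r)

/-- derivative of the hat of Q in any direction -/
lemma pdd_Qhat (hL : ∀ i, ContDiff ℝ (⊤ : ℕ∞) (L i))
    (hΓ : ∀ k i j, ContDiff ℝ (⊤ : ℕ∞) (Γ k i j))
    (hΦ : ∀ i, ContDiff ℝ (⊤ : ℕ∞) (Φ i)) (r : Fin n) (w q : Pt n) :
    pdd w (fun x => (∑ m, x.2 m * vCov Γ m L r x) + Fcov L Γ Φ r x) q
      = (∑ m, w.2 m * vCov Γ m L r q) + (∑ m, q.2 m * pdd w (vCov Γ m L r) q)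
        + pdd w (Fcov L Γ Φ r) q := by
  have hterm : ∀ m : Fin n, DifferentiableAt ℝ
      (fun x => x.2 m * vCov Γ m L r x) q :=
    fun m => (diffAt_coord2 m q).mul (diffAt (contDiff_vCovL hL hΓ m r) q)
  rw [pdd_add (f := fun x => (∑ m, x.2 m * vCov Γ m L r x))
      (g := fun x => Fcov L Γ Φ r x)
      w (DifferentiableAt.fun_sum (fun m _ => hterm m))
      (diffAt (contDiff_Fcov hL hΓ hΦ r) q)]
  rw [pdd_sum w Finset.univ _ (fun m _ => hterm m)]
  congr 1
  rw [show (∑ m, pdd w (fun x => x.2 m * vCov Γ m L r x) q)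
      = ∑ m, (w.2 m * vCov Γ m L r q + q.2 m * pdd w (vCov Γ m L r) q) from
    Finset.sum_congr rfl fun m _ => by
      rw [pdd_mul w (diffAt_coord2 m q) (diffAt (contDiff_vCovL hL hΓ m r) q),
        pdd_coord2]]
  rw [Finset.sum_add_distrib]

lemma pdv_Qhat (hL : ∀ i, ContDiff ℝ (⊤ : ℕ∞) (L i))
    (hΓ : ∀ k i j, ContDiff ℝ (⊤ : ℕ∞) (Γ k i j))
    (hΦ : ∀ i, ContDiff ℝ (⊤ : ℕ∞) (Φ i)) (r j : Fin n) (q : Pt n) :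
    pdv j (fun x => (∑ m, x.2 m * vCov Γ m L r x) + Fcov L Γ Φ r x) q
      = vCov Γ j L r q + (∑ m, q.2 m * pdv j (vCov Γ m L r) q)
        + pdv j (Fcov L Γ Φ r) q := by
  rw [pdv_eq_pdd, pdd_Qhat hL hΓ hΦ]
  simp only [Pi.single_apply, ite_mul, one_mul, zero_mul, Finset.sum_ite_eq',
    Finset.mem_univ, if_true]
  rfl

lemma pdx_Qhat (hL : ∀ i, ContDiff ℝ (⊤ : ℕ∞) (L i))
    (hΓ : ∀ k i j, ContDiff ℝ (⊤ : ℕ∞) (Γ k i j))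
    (hΦ : ∀ i, ContDiff ℝ (⊤ : ℕ∞) (Φ i)) (r k : Fin n) (q : Pt n) :
    pdx k (fun x => (∑ m, x.2 m * vCov Γ m L r x) + Fcov L Γ Φ r x) q
      = (∑ m, q.2 m * pdx k (vCov Γ m L r) q) + pdx k (Fcov L Γ Φ r) q := by
  rw [pdx_eq_pdd, pdd_Qhat hL hΓ hΦ]
  simp only [Pi.zero_apply, zero_mul, Finset.sum_const_zero, zero_add]
  rfl

end QhatSec

end Stmt7Aux
namespace Stmt7Aux

open Finset

variable {n : ℕ}

section VQ

variable {L : Fam n} {Γ : Conn n} {Φ : Fam n}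

lemma vCov_Qhat (hL : ∀ i, ContDiff ℝ (⊤ : ℕ∞) (L i))
    (hΓ : ∀ k i j, ContDiff ℝ (⊤ : ℕ∞) (Γ k i j))
    (hΦ : ∀ i, ContDiff ℝ (⊤ : ℕ∞) (Φ i))
    (hΓsym : ∀ (k i j : Fin n) (q : Pt n), Γ k i j q = Γ k j i q)
    (r k : Fin n) (q : Pt n) :
    vCov Γ k (fun r' x => (∑ m, x.2 m * vCov Γ m L r' x) + Fcov L Γ Φ r' x) r q
      = (∑ m, q.2 m * vCov2 Γ k (fun m' r' => vCov Γ m' L r') m r q)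
        + vCov Γ k (Fcov L Γ Φ) r q := by
  have hLd : vCov Γ k (fun r' x => (∑ m, x.2 m * vCov Γ m L r' x) + Fcov L Γ Φ r' x) r q
      = (((∑ m, q.2 m * pdx k (vCov Γ m L r) q) + pdx k (Fcov L Γ Φ r) q)
          - ∑ a, ∑ b, q.2 a * Γ b a k q
              * (vCov Γ b L r q + (∑ m, q.2 m * pdv b (vCov Γ m L r) q)
                  + pdv b (Fcov L Γ Φ r) q))
        - ∑ b, Γ b k r q * ((∑ m, q.2 m * vCov Γ m L b q) + Fcov L Γ Φ b q) := by
    rw [vCov, vS, pdx_Qhat hL hΓ hΦ]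
    congr 1
    congr 1
    exact Finset.sum_congr rfl fun a _ => Finset.sum_congr rfl fun b _ => by
      rw [pdv_Qhat hL hΓ hΦ]
  rw [hLd]
  have hM : (∑ a, ∑ b, q.2 a * Γ b a k q
        * (vCov Γ b L r q + (∑ m, q.2 m * pdv b (vCov Γ m L r) q)
            + pdv b (Fcov L Γ Φ r) q))
      = (∑ a, ∑ b, q.2 a * Γ b a k q * vCov Γ b L r q)
        + (∑ a, ∑ b, ∑ m, q.2 a * Γ b a k q * (q.2 m * pdv b (vCov Γ m L r) q))
        + (∑ a, ∑ b, q.2 a * Γ b a k q * pdv b (Fcov L Γ Φ r) q) := by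
    calc _ = ∑ a, ∑ b, (q.2 a * Γ b a k q * vCov Γ b L r q
          + (∑ m, q.2 a * Γ b a k q * (q.2 m * pdv b (vCov Γ m L r) q))
          + q.2 a * Γ b a k q * pdv b (Fcov L Γ Φ r) q) :=
        Finset.sum_congr rfl fun a _ => Finset.sum_congr rfl fun b _ => by
          rw [mul_add, mul_add, Finset.mul_sum]
      _ = _ := by simp only [Finset.sum_add_distrib]
  have hN : (∑ b, Γ b k r q * ((∑ m, q.2 m * vCov Γ m L b q) + Fcov L Γ Φ b q))
      = (∑ b, ∑ m, Γ b k r q * (q.2 m * vCov Γ m L b q))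
        + (∑ b, Γ b k r q * Fcov L Γ Φ b q) := by
    calc _ = ∑ b, ((∑ m, Γ b k r q * (q.2 m * vCov Γ m L b q))
          + Γ b k r q * Fcov L Γ Φ b q) :=
        Finset.sum_congr rfl fun b _ => by rw [mul_add, Finset.mul_sum]
      _ = _ := by simp only [Finset.sum_add_distrib]
  have hR : (∑ m, q.2 m * vCov2 Γ k (fun m' r' => vCov Γ m' L r') m r q)
      = (∑ m, q.2 m * pdx k (vCov Γ m L r) q)
        - (∑ m, ∑ a, ∑ b, q.2 m * (q.2 a * Γ b a k q * pdv b (vCov Γ m L r) q))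
        - (∑ m, ∑ b, q.2 m * (Γ b k m q * vCov Γ b L r q))
        - (∑ m, ∑ b, q.2 m * (Γ b k r q * vCov Γ m L b q)) := by
    calc _ = ∑ m, (q.2 m * pdx k (vCov Γ m L r) q
          - (∑ a, ∑ b, q.2 m * (q.2 a * Γ b a k q * pdv b (vCov Γ m L r) q))
          - (∑ b, q.2 m * (Γ b k m q * vCov Γ b L r q))
          - (∑ b, q.2 m * (Γ b k r q * vCov Γ m L b q))) :=
        Finset.sum_congr rfl fun m _ => by
          simp only [vCov2, vS, mul_sub, Finset.mul_sum]
      _ = _ := by simp only [Finset.sum_sub_distrib]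
  have hF : vCov Γ k (Fcov L Γ Φ) r q
      = pdx k (Fcov L Γ Φ r) q
        - (∑ a, ∑ b, q.2 a * Γ b a k q * pdv b (Fcov L Γ Φ r) q)
        - (∑ b, Γ b k r q * Fcov L Γ Φ b q) := by
    rw [vCov, vS]
  rw [hM, hN, hR, hF]
  have e1 : (∑ a, ∑ b, q.2 a * Γ b a k q * vCov Γ b L r q)
      = ∑ m, ∑ b, q.2 m * (Γ b k m q * vCov Γ b L r q) := by
    refine Finset.sum_congr rfl fun a _ => Finset.sum_congr rfl fun b _ => ?_
    rw [hΓsym b a k q]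
    ring
  have e2 : (∑ a, ∑ b, ∑ m, q.2 a * Γ b a k q * (q.2 m * pdv b (vCov Γ m L r) q))
      = ∑ m, ∑ a, ∑ b, q.2 m * (q.2 a * Γ b a k q * pdv b (vCov Γ m L r) q) := by
    rw [sum3_312 (fun a b m => q.2 a * Γ b a k q * (q.2 m * pdv b (vCov Γ m L r) q))]
    exact Finset.sum_congr rfl fun m _ => Finset.sum_congr rfl fun a _ =>
      Finset.sum_congr rfl fun b _ => by ring
  have e3 : (∑ b, ∑ m, Γ b k r q * (q.2 m * vCov Γ m L b q))
      = ∑ m, ∑ b, q.2 m * (Γ b k r q * vCov Γ m L b q) := by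
    rw [Finset.sum_comm]
    exact Finset.sum_congr rfl fun m _ => Finset.sum_congr rfl fun b _ => by ring
  linarith [e1, e2, e3]

end VQ

end Stmt7Aux
namespace Stmt7Aux

open Finset

variable {n : ℕ}

section Groups

variable {L V : Fam n} {ginv : Fin n → Fin n → Pt n → ℝ} {Γ : Conn n} {Φ Θ : Fam n}

/-- Hypotheses bundle as a structure to shorten statements. -/
structure Hyp (L V : Fam n) (ginv : Fin n → Fin n → Pt n → ℝ) (Γ : Conn n)
    (Φ Θ : Fam n) : Prop where
  hL : ∀ i, ContDiff ℝ (⊤ : ℕ∞) (L i)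
  hV : ∀ i, ContDiff ℝ (⊤ : ℕ∞) (V i)
  hLeft : ∀ q : Pt n, lamInv V (lam L q) = q
  hginv : ∀ (q : Pt n) (s k : Fin n), (∑ r, ginv s r q * gdn L r k q) = kron s k
  hΓ : ∀ k i j, ContDiff ℝ (⊤ : ℕ∞) (Γ k i j)
  hΓsym : ∀ (k i j : Fin n) (q : Pt n), Γ k i j q = Γ k j i q
  hΦ : ∀ i, ContDiff ℝ (⊤ : ℕ∞) (Φ i)
  hΘ : ∀ i, ContDiff ℝ (⊤ : ℕ∞) (Θ i)
  hΘdef : ∀ (q : Pt n) (i : Fin n),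
    Θ i (lam L q) = (∑ s, pdx s (L i) q * q.2 s) + (∑ s, pdv s (L i) q * Φ s q)

lemma Ucheck_hat_fun (H : Hyp L V ginv Γ Φ Θ) (k : Fin n) :
    (fun x => Ucheck Θ Γ V k (lam L x)) = Uv L ginv Γ Φ k :=
  funext (fun x => Ucheck_hat H.hL H.hV H.hginv H.hLeft H.hΓsym H.hΘdef k x)

lemma Qp_hat_fun (H : Hyp L V ginv Γ Φ Θ) (r : Fin n) :
    (fun x => Qp Θ Γ V r (lam L x))
      = (fun x => (∑ m, x.2 m * vCov Γ m L r x) + Fcov L Γ Φ r x) :=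
  funext (fun x => Qp_hat H.hLeft H.hΓsym H.hΘdef r x)

lemma G12 (H : Hyp L V ginv Γ Φ Θ) (k : Fin n) (q : Pt n) :
    (∑ r, pCov (Gp Γ V) r (Ucheck Θ Γ V) k (lam L q) * V r (lam L q))
      + (∑ r, pdv r (Ucheck Θ Γ V k) (lam L q) * Qp Θ Γ V r (lam L q))
    = (∑ r, q.2 r * vCov Γ r (Uv L ginv Γ Φ) k q)
      + (∑ j, Fvec Γ Φ j q * pdv j (Uv L ginv Γ Φ k) q) := by
  have hdU := diffAt (contDiff_Ucheck H.hΘ H.hΓ H.hV k) (lam L q)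
  have hB1 : (∑ r, pCov (Gp Γ V) r (Ucheck Θ Γ V) k (lam L q) * V r (lam L q))
      = (∑ r, q.2 r * vCov Γ r (Uv L ginv Γ Φ) k q)
        - ∑ r, ∑ j, ∑ s, pdv j (Uv L ginv Γ Φ k) q * ginv j s q
            * vCov Γ r L s q * q.2 r := by
    have hr : ∀ r, pCov (Gp Γ V) r (Ucheck Θ Γ V) k (lam L q) * V r (lam L q)
        = q.2 r * vCov Γ r (Uv L ginv Γ Φ) k q
          - ∑ j, ∑ s, pdv j (Uv L ginv Γ Φ k) q * ginv j s q
              * vCov Γ r L s q * q.2 r := by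
      intro r
      rw [master_pCov H.hL H.hginv H.hLeft k hdU (Ucheck_hat_fun H k)
        (fun b => Ucheck_hat H.hL H.hV H.hginv H.hLeft H.hΓsym H.hΘdef b q) r]
      rw [V_hat H.hLeft]
      rw [sub_mul, Finset.sum_mul]
      rw [Finset.sum_congr rfl fun j _ => Finset.sum_mul Finset.univ _ (q.2 r)]
      ring
    rw [Finset.sum_congr rfl fun r _ => hr r, Finset.sum_sub_distrib]
  have hB2 : (∑ r, pdv r (Ucheck Θ Γ V k) (lam L q) * Qp Θ Γ V r (lam L q))
      = (∑ r, ∑ j, ∑ m, pdv j (Uv L ginv Γ Φ k) q * ginv j r q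
          * (q.2 m * vCov Γ m L r q))
        + (∑ r, ∑ j, pdv j (Uv L ginv Γ Φ k) q * ginv j r q * Fcov L Γ Φ r q) := by
    have hr : ∀ r, pdv r (Ucheck Θ Γ V k) (lam L q) * Qp Θ Γ V r (lam L q)
        = (∑ j, ∑ m, pdv j (Uv L ginv Γ Φ k) q * ginv j r q
            * (q.2 m * vCov Γ m L r q))
          + (∑ j, pdv j (Uv L ginv Γ Φ k) q * ginv j r q * Fcov L Γ Φ r q) := by
      intro r
      rw [master_pdv H.hL H.hginv hdU (Ucheck_hat_fun H k) r,
        Qp_hat H.hLeft H.hΓsym H.hΘdef r q]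
      rw [Finset.sum_mul]
      rw [← Finset.sum_add_distrib]
      refine Finset.sum_congr rfl fun j _ => ?_
      rw [mul_add, Finset.mul_sum]
    rw [Finset.sum_congr rfl fun r _ => hr r, Finset.sum_add_distrib]
  rw [hB1, hB2]
  have e1 : (∑ r, ∑ j, ∑ s, pdv j (Uv L ginv Γ Φ k) q * ginv j s q
        * vCov Γ r L s q * q.2 r)
      = ∑ r, ∑ j, ∑ m, pdv j (Uv L ginv Γ Φ k) q * ginv j r q
          * (q.2 m * vCov Γ m L r q) := by
    rw [sum3_321 (fun r j s => pdv j (Uv L ginv Γ Φ k) q * ginv j s q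
      * vCov Γ r L s q * q.2 r)]
    exact Finset.sum_congr rfl fun s _ => Finset.sum_congr rfl fun j _ =>
      Finset.sum_congr rfl fun r _ => by ring
  have e2 : (∑ r, ∑ j, pdv j (Uv L ginv Γ Φ k) q * ginv j r q * Fcov L Γ Φ r q)
      = ∑ j, Fvec Γ Φ j q * pdv j (Uv L ginv Γ Φ k) q := by
    have hr : ∀ r j, pdv j (Uv L ginv Γ Φ k) q * ginv j r q * Fcov L Γ Φ r q
        = ∑ m, pdv j (Uv L ginv Γ Φ k) q * Fvec Γ Φ m q * (ginv j r q * gdn L r m q) := by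
      intro r j
      rw [Fcov, Finset.mul_sum]
      exact Finset.sum_congr rfl fun m _ => by ring
    rw [Finset.sum_congr rfl fun r _ => Finset.sum_congr rfl fun j _ => hr r j]
    rw [sum3_213 (fun r j m => pdv j (Uv L ginv Γ Φ k) q * Fvec Γ Φ m q
      * (ginv j r q * gdn L r m q))]
    refine Finset.sum_congr rfl fun j _ => ?_
    rw [show (∑ r, ∑ m, pdv j (Uv L ginv Γ Φ k) q * Fvec Γ Φ m q
          * (ginv j r q * gdn L r m q))
        = ∑ m, pdv j (Uv L ginv Γ Φ k) q * Fvec Γ Φ m q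
            * ∑ r, ginv j r q * gdn L r m q by
      rw [Finset.sum_comm]
      exact Finset.sum_congr rfl fun m _ => by rw [Finset.mul_sum]]
    rw [show (∑ m, pdv j (Uv L ginv Γ Φ k) q * Fvec Γ Φ m q
          * ∑ r, ginv j r q * gdn L r m q)
        = ∑ m, (fun m => pdv j (Uv L ginv Γ Φ k) q * Fvec Γ Φ m q) m * kron j m from
      Finset.sum_congr rfl fun m _ => by rw [H.hginv q j m]]
    rw [sum_mul_kron' j (fun m => pdv j (Uv L ginv Γ Φ k) q * Fvec Γ Φ m q)]
    ring
  linarith [e1, e2]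

lemma G3 (H : Hyp L V ginv Γ Φ Θ) (k : Fin n) (q : Pt n) :
    (∑ r, pVec (Gp Γ V) k V r (lam L q) * Ucheck Θ Γ V r (lam L q))
    = -(∑ j, ∑ r, ∑ s, vCov Γ k L j q * ginv r j q * q.2 s * vCov Γ s L r q)
      - (∑ j, ∑ r, vCov Γ k L j q * ginv r j q * Fcov L Γ Φ r q)
      + (∑ r, ∑ m, ∑ a, ginv r m q * vCov Γ k L m q * Lup L ginv a q
          * vCov Γ r L a q) := by
  have hr : ∀ r, pVec (Gp Γ V) k V r (lam L q) * Ucheck Θ Γ V r (lam L q)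
      = -(∑ m, ∑ s, ginv r m q * vCov Γ k L m q * (q.2 s * vCov Γ s L r q))
        - (∑ m, ginv r m q * vCov Γ k L m q * Fcov L Γ Φ r q)
        + (∑ m, ∑ a, ginv r m q * vCov Γ k L m q * (Lup L ginv a q
            * vCov Γ r L a q)) := by
    intro r
    rw [pVecV_hat H.hL H.hV H.hginv H.hLeft H.hΓsym,
      Ucheck_hat H.hL H.hV H.hginv H.hLeft H.hΓsym H.hΘdef, Uv]
    rw [neg_mul, Finset.sum_mul]
    rw [Finset.sum_congr rfl (fun m _ => show
      ginv r m q * vCov Γ k L m q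
        * ((∑ j, q.2 j * vCov Γ j L r q) - (∑ j, Lup L ginv j q * vCov Γ r L j q)
          + Fcov L Γ Φ r q)
      = (∑ s, ginv r m q * vCov Γ k L m q * (q.2 s * vCov Γ s L r q))
        - (∑ a, ginv r m q * vCov Γ k L m q * (Lup L ginv a q * vCov Γ r L a q))
        + ginv r m q * vCov Γ k L m q * Fcov L Γ Φ r q from by
      rw [mul_add, mul_sub, Finset.mul_sum, Finset.mul_sum])]
    simp only [Finset.sum_add_distrib, Finset.sum_sub_distrib]
    ring
  rw [Finset.sum_congr rfl fun r _ => hr r]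
  simp only [Finset.sum_add_distrib, Finset.sum_sub_distrib, Finset.sum_neg_distrib]
  have e1 : (∑ r, ∑ m, ∑ s, ginv r m q * vCov Γ k L m q * (q.2 s * vCov Γ s L r q))
      = ∑ j, ∑ r, ∑ s, vCov Γ k L j q * ginv r j q * q.2 s * vCov Γ s L r q := by
    rw [sum3_213 (fun r m s => ginv r m q * vCov Γ k L m q * (q.2 s * vCov Γ s L r q))]
    exact Finset.sum_congr rfl fun j _ => Finset.sum_congr rfl fun r _ =>
      Finset.sum_congr rfl fun s _ => by ring
  have e2 : (∑ r, ∑ m, ginv r m q * vCov Γ k L m q * Fcov L Γ Φ r q)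
      = ∑ j, ∑ r, vCov Γ k L j q * ginv r j q * Fcov L Γ Φ r q := by
    rw [Finset.sum_comm]
    exact Finset.sum_congr rfl fun j _ => Finset.sum_congr rfl fun r _ => by ring
  have e3 : (∑ r, ∑ m, ∑ a, ginv r m q * vCov Γ k L m q
        * (Lup L ginv a q * vCov Γ r L a q))
      = ∑ r, ∑ m, ∑ a, ginv r m q * vCov Γ k L m q * Lup L ginv a q
          * vCov Γ r L a q :=
    Finset.sum_congr rfl fun r _ => Finset.sum_congr rfl fun m _ =>
      Finset.sum_congr rfl fun a _ => by ring
  linarith [e1, e2, e3]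

end Groups

end Stmt7Aux
namespace Stmt7Aux

open Finset

variable {n : ℕ}

section Groups2

variable {L V : Fam n} {ginv : Fin n → Fin n → Pt n → ℝ} {Γ : Conn n} {Φ Θ : Fam n}

lemma G4 (H : Hyp L V ginv Γ Φ Θ) (k : Fin n) (q : Pt n) :
    (∑ r, pCov (Gp Γ V) k (Qp Θ Γ V) r (lam L q) * Wp V r (lam L q))
    = (∑ r, Lup L ginv r q * vCov Γ k (Fcov L Γ Φ) r q)
      + (∑ m, ∑ r, Lup L ginv r q * q.2 m
          * vCov2 Γ k (fun m' r' => vCov Γ m' L r') m r q)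
      - (∑ j, ∑ r, ∑ s, Lup L ginv r q * vCov Γ k L j q * ginv s j q
          * pdv s (Fcov L Γ Φ r) q)
      - (∑ j, ∑ m, ∑ r, ∑ s, Lup L ginv r q * vCov Γ k L j q * ginv s j q * q.2 m
          * pdv s (vCov Γ m L r) q)
      - (∑ r, ∑ m, ∑ a, ginv r m q * vCov Γ k L m q * Lup L ginv a q
          * vCov Γ r L a q) := by
  have hr : ∀ r, pCov (Gp Γ V) k (Qp Θ Γ V) r (lam L q) * Wp V r (lam L q)
      = Lup L ginv r q * ((∑ m, q.2 m * vCov2 Γ k (fun m' r' => vCov Γ m' L r') m r q)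
            + vCov Γ k (Fcov L Γ Φ) r q)
        - ∑ j, ∑ s, (vCov Γ j L r q + (∑ m, q.2 m * pdv j (vCov Γ m L r) q)
            + pdv j (Fcov L Γ Φ r) q) * ginv j s q * vCov Γ k L s q
            * Lup L ginv r q := by
    intro r
    rw [master_pCov H.hL H.hginv H.hLeft r
      (diffAt (contDiff_Qp H.hΘ H.hΓ H.hV r) (lam L q))
      (EX := fun r' x => (∑ m, x.2 m * vCov Γ m L r' x) + Fcov L Γ Φ r' x)
      (Qp_hat_fun H r)
      (fun b => Qp_hat H.hLeft H.hΓsym H.hΘdef b q) k]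
    rw [Wp_hat H.hL H.hV H.hginv H.hLeft]
    rw [sub_mul, Finset.sum_mul]
    rw [Finset.sum_congr rfl (fun j _ => Finset.sum_mul Finset.univ _ (Lup L ginv r q))]
    congr 1
    · rw [vCov_Qhat H.hL H.hΓ H.hΦ H.hΓsym r k q, mul_comm]
    · exact Finset.sum_congr rfl fun j _ => Finset.sum_congr rfl fun s _ => by
        rw [pdv_Qhat H.hL H.hΓ H.hΦ r j q]
  rw [Finset.sum_congr rfl fun r _ => hr r, Finset.sum_sub_distrib]
  -- expand the first part
  have h1 : (∑ r, Lup L ginv r q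
        * ((∑ m, q.2 m * vCov2 Γ k (fun m' r' => vCov Γ m' L r') m r q)
            + vCov Γ k (Fcov L Γ Φ) r q))
      = (∑ r, ∑ m, Lup L ginv r q * (q.2 m
            * vCov2 Γ k (fun m' r' => vCov Γ m' L r') m r q))
        + (∑ r, Lup L ginv r q * vCov Γ k (Fcov L Γ Φ) r q) := by
    rw [← Finset.sum_add_distrib]
    exact Finset.sum_congr rfl fun r _ => by rw [mul_add, Finset.mul_sum]
  -- expand the correction part
  have h2 : (∑ r, ∑ j, ∑ s, (vCov Γ j L r q + (∑ m, q.2 m * pdv j (vCov Γ m L r) q)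
          + pdv j (Fcov L Γ Φ r) q) * ginv j s q * vCov Γ k L s q * Lup L ginv r q)
      = (∑ r, ∑ j, ∑ s, vCov Γ j L r q * ginv j s q * vCov Γ k L s q * Lup L ginv r q)
        + (∑ r, ∑ j, ∑ s, ∑ m, q.2 m * pdv j (vCov Γ m L r) q * ginv j s q
            * vCov Γ k L s q * Lup L ginv r q)
        + (∑ r, ∑ j, ∑ s, pdv j (Fcov L Γ Φ r) q * ginv j s q * vCov Γ k L s q
            * Lup L ginv r q) := by
    have : ∀ r j s, (vCov Γ j L r q + (∑ m, q.2 m * pdv j (vCov Γ m L r) q)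
          + pdv j (Fcov L Γ Φ r) q) * ginv j s q * vCov Γ k L s q * Lup L ginv r q
        = vCov Γ j L r q * ginv j s q * vCov Γ k L s q * Lup L ginv r q
          + (∑ m, q.2 m * pdv j (vCov Γ m L r) q * ginv j s q * vCov Γ k L s q
              * Lup L ginv r q)
          + pdv j (Fcov L Γ Φ r) q * ginv j s q * vCov Γ k L s q * Lup L ginv r q := by
      intro r j s
      rw [add_mul, add_mul, add_mul, add_mul, add_mul, add_mul, Finset.sum_mul,
        Finset.sum_mul, Finset.sum_mul]
    rw [Finset.sum_congr rfl fun r _ => Finset.sum_congr rfl fun j _ =>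
      Finset.sum_congr rfl fun s _ => this r j s]
    simp only [Finset.sum_add_distrib]
  rw [h1, h2]
  -- match the five pieces
  have e6 : (∑ r, ∑ m, Lup L ginv r q * (q.2 m
        * vCov2 Γ k (fun m' r' => vCov Γ m' L r') m r q))
      = ∑ m, ∑ r, Lup L ginv r q * q.2 m
          * vCov2 Γ k (fun m' r' => vCov Γ m' L r') m r q := by
    rw [Finset.sum_comm]
    exact Finset.sum_congr rfl fun m _ => Finset.sum_congr rfl fun r _ => by ring
  have eC1 : (∑ r, ∑ j, ∑ s, vCov Γ j L r q * ginv j s q * vCov Γ k L s q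
        * Lup L ginv r q)
      = ∑ r, ∑ m, ∑ a, ginv r m q * vCov Γ k L m q * Lup L ginv a q
          * vCov Γ r L a q := by
    rw [sum3_231 (fun r j s => vCov Γ j L r q * ginv j s q * vCov Γ k L s q
      * Lup L ginv r q)]
    exact Finset.sum_congr rfl fun r _ => Finset.sum_congr rfl fun m _ =>
      Finset.sum_congr rfl fun a _ => by ring
  have eC2 : (∑ r, ∑ j, ∑ s, ∑ m, q.2 m * pdv j (vCov Γ m L r) q * ginv j s q
        * vCov Γ k L s q * Lup L ginv r q)
      = ∑ j, ∑ m, ∑ r, ∑ s, Lup L ginv r q * vCov Γ k L j q * ginv s j q * q.2 m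
          * pdv s (vCov Γ m L r) q := by
    rw [Finset.sum_congr rfl fun r _ => sum3_231 (fun j s m =>
      q.2 m * pdv j (vCov Γ m L r) q * ginv j s q * vCov Γ k L s q * Lup L ginv r q)]
    rw [sum3_231 (fun r s m => ∑ j, q.2 m * pdv j (vCov Γ m L r) q * ginv j s q
      * vCov Γ k L s q * Lup L ginv r q)]
    exact Finset.sum_congr rfl fun s _ => Finset.sum_congr rfl fun m _ =>
      Finset.sum_congr rfl fun r _ => Finset.sum_congr rfl fun j _ => by ring
  have eC3 : (∑ r, ∑ j, ∑ s, pdv j (Fcov L Γ Φ r) q * ginv j s q * vCov Γ k L s q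
        * Lup L ginv r q)
      = ∑ j, ∑ r, ∑ s, Lup L ginv r q * vCov Γ k L j q * ginv s j q
          * pdv s (Fcov L Γ Φ r) q := by
    rw [sum3_312 (fun r j s => pdv j (Fcov L Γ Φ r) q * ginv j s q * vCov Γ k L s q
      * Lup L ginv r q)]
    exact Finset.sum_congr rfl fun s _ => Finset.sum_congr rfl fun r _ =>
      Finset.sum_congr rfl fun j _ => by ring
  linarith [e6, eC1, eC2, eC3]

end Groups2

end Stmt7Aux
namespace Stmt7Aux

open Finset

variable {n : ℕ}

section Groups3

variable {L V : Fam n} {ginv : Fin n → Fin n → Pt n → ℝ} {Γ : Conn n} {Φ Θ : Fam n}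

lemma Dv_sym (hΓsym : ∀ (k i j : Fin n) (q : Pt n), Γ k i j q = Γ k j i q)
    (s k r a : Fin n) (q : Pt n) : Dv Γ s k r a q = Dv Γ s r k a q := by
  rw [Dv, Dv]
  have : Γ s r k = Γ s k r := funext fun x => hΓsym s r k x
  rw [this]

lemma expand5 (X t u w F : ℝ) (s1 s2 : Fin n → Fin n → ℝ) (d e : Fin n → ℝ) :
    ((X + (∑ a, ∑ b, s1 a b) - ∑ a, ∑ b, s2 a b) * t
        - (∑ a, d a) * ((∑ j, e j) + F)) * u * w
    = X * t * u * w + (∑ a, ∑ b, s1 a b * t * u * w)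
      - (∑ a, ∑ b, s2 a b * t * u * w)
      - (∑ a, ∑ j, d a * e j * u * w) - (∑ a, d a * F * u * w) := by
  have c1 : ∀ (f : Fin n → Fin n → ℝ), (∑ a, ∑ b, f a b * t * u * w)
      = (∑ a, ∑ b, f a b) * (t * u * w) := by
    intro f
    rw [Finset.sum_mul]
    exact Finset.sum_congr rfl fun a _ => by
      rw [Finset.sum_mul]
      exact Finset.sum_congr rfl fun b _ => by ring
  have c3 : (∑ a, ∑ j, d a * e j * u * w) = (∑ a, d a) * ((∑ j, e j) * (u * w)) := by
    rw [Finset.sum_mul]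
    refine Finset.sum_congr rfl fun a _ => ?_
    calc (∑ j, d a * e j * u * w) = ∑ j, d a * (e j * (u * w)) :=
          Finset.sum_congr rfl fun j _ => by ring
      _ = d a * ∑ j, e j * (u * w) := (Finset.mul_sum _ _ _).symm
      _ = d a * ((∑ j, e j) * (u * w)) := by rw [Finset.sum_mul]
  have c4 : (∑ a, d a * F * u * w) = (∑ a, d a) * (F * u * w) := by
    rw [Finset.sum_mul]
    exact Finset.sum_congr rfl fun a _ => by ring
  rw [c1 s1, c1 s2, c3, c4]
  ring

lemma G5 (H : Hyp L V ginv Γ Φ Θ) (k : Fin n) (q : Pt n) :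
    (∑ r, ∑ s, ∑ m, (Rp (Gp Γ V) s r m k (lam L q) * V m (lam L q)
        - Dp (Gp Γ V) s m r k (lam L q) * Qp Θ Γ V m (lam L q))
        * Wp V r (lam L q) * (lam L q).2 s)
    = (∑ r, ∑ s, ∑ m, Rv Γ s r m k q * q.2 m * Lup L ginv r q * L s q)
      - (∑ j, ∑ r, ∑ s, ∑ m, ∑ a, ginv a j q * vCov Γ k L j q * Dv Γ s m r a q
          * q.2 m * Lup L ginv r q * L s q)
      - (∑ r, ∑ s, ∑ m, ∑ a, ginv a m q * Dv Γ s r k a q * Fcov L Γ Φ m q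
          * Lup L ginv r q * L s q) := by
  have ht : ∀ r s m : Fin n, (Rp (Gp Γ V) s r m k (lam L q) * V m (lam L q)
        - Dp (Gp Γ V) s m r k (lam L q) * Qp Θ Γ V m (lam L q))
        * Wp V r (lam L q) * (lam L q).2 s
      = Rv Γ s r m k q * q.2 m * Lup L ginv r q * L s q
        + (∑ a, ∑ b, (ginv a b q * vCov Γ m L b q * Dv Γ s r k a q) * q.2 m
            * Lup L ginv r q * L s q)
        - (∑ a, ∑ b, (ginv a b q * vCov Γ k L b q * Dv Γ s r m a q) * q.2 m
            * Lup L ginv r q * L s q)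
        - (∑ a, ∑ j, (ginv a m q * Dv Γ s k r a q) * (q.2 j * vCov Γ j L m q)
            * Lup L ginv r q * L s q)
        - (∑ a, (ginv a m q * Dv Γ s k r a q) * Fcov L Γ Φ m q
            * Lup L ginv r q * L s q) := by
    intro r s m
    rw [Rp_hat H.hL H.hV H.hΓ H.hginv H.hLeft H.hΓsym s r m k q,
      Dp_hat H.hL H.hV H.hΓ H.hginv H.hLeft s m r k q,
      Qp_hat H.hLeft H.hΓsym H.hΘdef m q,
      V_hat H.hLeft m q, Wp_hat H.hL H.hV H.hginv H.hLeft r q, lam_snd s q]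
    exact expand5 (Rv Γ s r m k q) (q.2 m) (Lup L ginv r q) (L s q)
      (Fcov L Γ Φ m q)
      (fun a b => ginv a b q * vCov Γ m L b q * Dv Γ s r k a q)
      (fun a b => ginv a b q * vCov Γ k L b q * Dv Γ s r m a q)
      (fun a => ginv a m q * Dv Γ s k r a q)
      (fun j => q.2 j * vCov Γ j L m q)
  rw [Finset.sum_congr rfl fun r _ => Finset.sum_congr rfl fun s _ =>
    Finset.sum_congr rfl fun m _ => ht r s m]
  simp only [Finset.sum_add_distrib, Finset.sum_sub_distrib]
  -- name the five pieces via permutation identities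
  have eA : (∑ r, ∑ s, ∑ m, ∑ a, ∑ b,
        (ginv a b q * vCov Γ m L b q * Dv Γ s r k a q) * q.2 m
          * Lup L ginv r q * L s q)
      = ∑ r, ∑ s, ∑ m, ∑ a, ∑ j,
          (ginv a m q * Dv Γ s k r a q) * (q.2 j * vCov Γ j L m q)
            * Lup L ginv r q * L s q := by
    refine Finset.sum_congr rfl fun r _ => Finset.sum_congr rfl fun s _ => ?_
    rw [sum3_321 (fun m a b => (ginv a b q * vCov Γ m L b q * Dv Γ s r k a q)
      * q.2 m * Lup L ginv r q * L s q)]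
    refine Finset.sum_congr rfl fun m _ => Finset.sum_congr rfl fun a _ =>
      Finset.sum_congr rfl fun j _ => ?_
    rw [Dv_sym H.hΓsym s k r a q]
    ring
  have eB : (∑ r, ∑ s, ∑ m, ∑ a, ∑ b,
        (ginv a b q * vCov Γ k L b q * Dv Γ s r m a q) * q.2 m
          * Lup L ginv r q * L s q)
      = ∑ j, ∑ r, ∑ s, ∑ m, ∑ a, ginv a j q * vCov Γ k L j q * Dv Γ s m r a q
          * q.2 m * Lup L ginv r q * L s q := by
    rw [Finset.sum_congr rfl fun r _ => Finset.sum_congr rfl fun s _ =>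
      sum3_312 (fun m a b => (ginv a b q * vCov Γ k L b q * Dv Γ s r m a q)
        * q.2 m * Lup L ginv r q * L s q)]
    rw [sum3_312 (fun r s b => ∑ m, ∑ a,
      (ginv a b q * vCov Γ k L b q * Dv Γ s r m a q) * q.2 m
        * Lup L ginv r q * L s q)]
    refine Finset.sum_congr rfl fun j _ => Finset.sum_congr rfl fun r _ =>
      Finset.sum_congr rfl fun s _ => Finset.sum_congr rfl fun m _ =>
      Finset.sum_congr rfl fun a _ => ?_
    rw [Dv_sym H.hΓsym s r m a q]
  have eC : (∑ r, ∑ s, ∑ m, ∑ a, (ginv a m q * Dv Γ s k r a q) * Fcov L Γ Φ m q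
        * Lup L ginv r q * L s q)
      = ∑ r, ∑ s, ∑ m, ∑ a, ginv a m q * Dv Γ s r k a q * Fcov L Γ Φ m q
          * Lup L ginv r q * L s q := by
    refine Finset.sum_congr rfl fun r _ => Finset.sum_congr rfl fun s _ =>
      Finset.sum_congr rfl fun m _ => Finset.sum_congr rfl fun a _ => ?_
    rw [Dv_sym H.hΓsym s k r a q]
  linarith [eA, eB, eC]

end Groups3

end Stmt7Aux

theorem stmt7
    (n : ℕ) (hn : 2 ≤ n)
    (L V : Fam n) (ginv : Fin n → Fin n → Pt n → ℝ)
    (hL : ∀ i, ContDiff ℝ (⊤ : ℕ∞) (L i))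
    (hV : ∀ i, ContDiff ℝ (⊤ : ℕ∞) (V i))
    (hginvSm : ∀ i j, ContDiff ℝ (⊤ : ℕ∞) (ginv i j))
    (hLeft : ∀ q : Pt n, lamInv V (lam L q) = q)
    (hRight : ∀ q : Pt n, lam L (lamInv V q) = q)
    (hginv : ∀ (q : Pt n) (s k : Fin n), (∑ r, ginv s r q * gdn L r k q) = kron s k)
    (Γ : Conn n)
    (hΓ : ∀ k i j, ContDiff ℝ (⊤ : ℕ∞) (Γ k i j))
    (hΓsym : ∀ (k i j : Fin n) (q : Pt n), Γ k i j q = Γ k j i q)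
    (Φ : Fam n) (hΦ : ∀ i, ContDiff ℝ (⊤ : ℕ∞) (Φ i))
    (Θ : Fam n) (hΘ : ∀ i, ContDiff ℝ (⊤ : ℕ∞) (Θ i))
    (hΘdef : ∀ (q : Pt n) (i : Fin n),
      Θ i (lam L q) = (∑ s, pdx s (L i) q * q.2 s) + (∑ s, pdv s (L i) q * Φ s q)) :
    ∀ (q : Pt n) (k : Fin n),
      betaCheck Θ Γ V k (lam L q) = betaV L ginv Γ Φ k q := by
  intro q k
  have H : Stmt7Aux.Hyp L V ginv Γ Φ Θ :=
    ⟨hL, hV, hLeft, hginv, hΓ, hΓsym, hΦ, hΘ, hΘdef⟩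
  have g12 := Stmt7Aux.G12 H k q
  have g3 := Stmt7Aux.G3 H k q
  have g4 := Stmt7Aux.G4 H k q
  have g5 := Stmt7Aux.G5 H k q
  rw [betaCheck, betaV]
  linarith [g12, g3, g4, g5]
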